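/- arXiv:1001.2381 — 3 statements merged into one kernel-verified Lean document; each statement's English description precedes it below -/
import Mathlib

section
/- Let T > 0 and let x and x_n (n ∈ ℕ) be càdlàg functions on [0,T] with d_{M₁}(x_n, x) → 0 as n → ∞. If in addition each x_n is continuous on [0,T], then limsup_{n→∞} sup_{t∈[0,T]} |x_n(t) − x(t)| ≤ J_max(x). (Lemma 4.2(c).) -/
open Set Filter MeasureTheory Topology

/-- The left limit of `x` at `t`, with the convention `x(0−) = x(0)`. -/
noncomputable def leftL (x : ℝ → ℝ) (t : ℝ) : ℝ :=
  if t = 0 then x 0 else Function.leftLim x t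

/-- `x` is càdlàg on `[0, T]`: right-continuous on `[0, T)` and with left limits on `(0, T]`. -/
def IsCadlagOn (T : ℝ) (x : ℝ → ℝ) : Prop :=
  (∀ t ∈ Set.Ico (0:ℝ) T, Filter.Tendsto x (nhdsWithin t (Set.Ici t)) (nhds (x t))) ∧
  (∀ t ∈ Set.Ioc (0:ℝ) T, ∃ L : ℝ, Filter.Tendsto x (nhdsWithin t (Set.Iio t)) (nhds L))

/-- `(u, r)` is a parametric representation of the càdlàg function `x` on `[0, T]`. -/
def IsParamRep (T : ℝ) (x u r : ℝ → ℝ) : Prop :=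
  ContinuousOn u (Set.Icc 0 1) ∧ ContinuousOn r (Set.Icc 0 1) ∧
  MonotoneOn r (Set.Icc 0 1) ∧ r 0 = 0 ∧ r 1 = T ∧
  (∀ s ∈ Set.Icc (0:ℝ) 1, u s ∈ segment ℝ (leftL x (r s)) (x (r s))) ∧
  (∀ t ∈ Set.Icc (0:ℝ) T, ∀ v ∈ segment ℝ (leftL x t) (x t),
    ∃ s ∈ Set.Icc (0:ℝ) 1, r s = t ∧ u s = v) ∧
  (∀ s₁ ∈ Set.Icc (0:ℝ) 1, ∀ s₂ ∈ Set.Icc (0:ℝ) 1, s₁ ≤ s₂ → r s₁ = r s₂ →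
    0 ≤ (u s₂ - u s₁) * (x (r s₁) - leftL x (r s₁)))

/-- Uniform norm over `[0, 1]`. -/
noncomputable def unif (f : ℝ → ℝ) : ℝ := ⨆ s : Set.Icc (0:ℝ) 1, |f s.1|

/-- Uniform norm over `[0, T]`. -/
noncomputable def supT (T : ℝ) (f : ℝ → ℝ) : ℝ := ⨆ t : Set.Icc (0:ℝ) T, |f t.1|

/-- The maximum-jump functional `J_max(x)` over `[0, T]`. -/
noncomputable def Jmax (T : ℝ) (x : ℝ → ℝ) : ℝ :=
  ⨆ t : Set.Icc (0:ℝ) T, |x t.1 - leftL x t.1|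

/-- The Skorohod `M₁` metric on `D([0, T], ℝ)`. -/
noncomputable def dM1 (T : ℝ) (x y : ℝ → ℝ) : ℝ :=
  sInf {d : ℝ | ∃ ux rx uy ry : ℝ → ℝ, IsParamRep T x ux rx ∧ IsParamRep T y uy ry ∧
    d = max (unif fun s => ux s - uy s) (unif fun s => rx s - ry s)}

/-- The `L₁` norm over `[0, 1]`. -/
noncomputable def L1norm (g : ℝ → ℝ) : ℝ := ∫ s in (0:ℝ)..1, |g s|

/-- `r` is absolutely continuous on `[0,1]` with (integrable) derivative `r'`. -/
def AbsContOn01 (r r' : ℝ → ℝ) : Prop :=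
  IntervalIntegrable r' MeasureTheory.volume 0 1 ∧
  ∀ s ∈ Set.Icc (0:ℝ) 1, r s = r 0 + ∫ w in (0:ℝ)..s, r' w

/-- `y` is bounded and Borel measurable on `[0, T]`. -/
def BddMeasOn (T : ℝ) (y : ℝ → ℝ) : Prop :=
  (∃ M : ℝ, ∀ t ∈ Set.Icc (0:ℝ) T, |y t| ≤ M) ∧
  Measurable fun t : Set.Icc (0:ℝ) T => y t.1

/-- The `M₁` oscillation function `w_s(x, δ)` on `[0, T]`. -/
noncomputable def wOsc (T : ℝ) (x : ℝ → ℝ) (δ : ℝ) : ℝ :=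
  sSup {v : ℝ | ∃ t ∈ Set.Icc (0:ℝ) T, ∃ t₁ t₂ t₃ : ℝ,
    max 0 (t - δ) ≤ t₁ ∧ t₁ < t₂ ∧ t₂ < t₃ ∧ t₃ ≤ min (t + δ) T ∧
    v = Metric.infDist (x t₂) (segment ℝ (x t₁) (x t₃))}

/-- The ordinary oscillation modulus `ν(x, δ)` on `[0, T]`. -/
noncomputable def nuOsc (T : ℝ) (x : ℝ → ℝ) (δ : ℝ) : ℝ :=
  sSup {v : ℝ | ∃ t ∈ Set.Icc (0:ℝ) (T - δ), ∃ t₁ ∈ Set.Icc t (t + δ),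
    ∃ t₂ ∈ Set.Icc t (t + δ), v = |x t₁ - x t₂|}

lemma abs_sub_le_max_of_mem_segment {a b v z : ℝ} (h : v ∈ segment ℝ a b) :
    |v - z| ≤ max (|a - z|) (|b - z|) := by
  obtain ⟨p, q, hp, hq, hpq, rfl⟩ := h
  have h1 : p • a + q • b - z = p * (a - z) + q * (b - z) := by
    simp only [smul_eq_mul]; linear_combination z * hpq
  rw [h1]
  calc |p * (a - z) + q * (b - z)| ≤ |p * (a - z)| + |q * (b - z)| := abs_add_le _ _
    _ = p * |a - z| + q * |b - z| := by
        rw [abs_mul, abs_mul, abs_of_nonneg hp, abs_of_nonneg hq]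
    _ ≤ p * max (|a - z|) (|b - z|) + q * max (|a - z|) (|b - z|) := by
        gcongr
        · exact le_max_left _ _
        · exact le_max_right _ _
    _ = max (|a - z|) (|b - z|) := by rw [← add_mul, hpq, one_mul]

lemma leftL_eq_of_tendsto {x : ℝ → ℝ} {t L : ℝ} (ht : t ≠ 0)
    (h : Tendsto x (𝓝[<] t) (𝓝 L)) : leftL x t = L := by
  rw [leftL, if_neg ht]
  exact leftLim_eq_of_tendsto h

lemma IsCadlagOn.tendsto_leftL {T : ℝ} {x : ℝ → ℝ} (hx : IsCadlagOn T x) {t : ℝ}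
    (ht : t ∈ Ioc (0:ℝ) T) : Tendsto x (𝓝[<] t) (𝓝 (leftL x t)) := by
  obtain ⟨L, hL⟩ := hx.2 t ht
  rwa [leftL_eq_of_tendsto (ne_of_gt ht.1) hL]

lemma leftL_eq_self_of_continuousOn {T : ℝ} {x : ℝ → ℝ} (hc : ContinuousOn x (Icc 0 T))
    {t : ℝ} (ht : t ∈ Icc (0:ℝ) T) : leftL x t = x t := by
  rcases eq_or_ne t 0 with rfl | h0
  · rw [leftL, if_pos rfl]
  · have htpos : 0 < t := lt_of_le_of_ne ht.1 (Ne.symm h0)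
    apply leftL_eq_of_tendsto h0
    refine (hc t ht).mono_left (nhdsWithin_le_iff.mpr ?_)
    refine mem_of_superset (Ioo_mem_nhdsLT htpos) ?_
    exact fun w hw => ⟨hw.1.le, hw.2.le.trans ht.2⟩

lemma IsParamRep.r_mem_Icc {T : ℝ} {x u r : ℝ → ℝ} (h : IsParamRep T x u r) {s : ℝ}
    (hs : s ∈ Icc (0:ℝ) 1) : r s ∈ Icc (0:ℝ) T := by
  obtain ⟨-, -, hmono, h0, h1, -⟩ := h
  constructor
  · rw [← h0]
    exact hmono (by simp [left_mem_Icc]) hs hs.1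
  · rw [← h1]
    exact hmono hs (by simp [right_mem_Icc]) hs.2

lemma exists_rep_continuous {T : ℝ} (hT : 0 < T) {x : ℝ → ℝ}
    (hc : ContinuousOn x (Icc 0 T)) : IsParamRep T x (fun s => x (T * s)) (fun s => T * s) := by
  have hmaps : ∀ s ∈ Icc (0:ℝ) 1, T * s ∈ Icc (0:ℝ) T := fun s hs =>
    ⟨mul_nonneg hT.le hs.1, by nlinarith [hs.2]⟩
  have hLx : ∀ s ∈ Icc (0:ℝ) 1, leftL x (T * s) = x (T * s) := fun s hs =>
    leftL_eq_self_of_continuousOn hc (hmaps s hs)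
  refine ⟨?_, ?_, ?_, ?_, ?_, ?_, ?_, ?_⟩
  · exact hc.comp (continuous_const.mul continuous_id).continuousOn hmaps
  · exact (continuous_const.mul continuous_id).continuousOn
  · exact fun a _ b _ hab => by simpa using mul_le_mul_of_nonneg_left hab hT.le
  · simp
  · simp
  · intro s hs
    rw [hLx s hs]
    exact right_mem_segment ℝ _ _
  · intro t ht v hv
    rw [leftL_eq_self_of_continuousOn hc ht, segment_same] at hv
    refine ⟨t / T, ⟨div_nonneg ht.1 hT.le, (div_le_one hT).2 ht.2⟩, ?_, ?_⟩
    · field_simp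
    · show x (T * (t / T)) = v
      rw [mul_div_cancel₀ t hT.ne', hv]
  · intro s₁ _ s₂ _ _ heq
    have : s₁ = s₂ := mul_left_cancel₀ hT.ne' heq
    subst this
    simp

lemma le_unif {g : ℝ → ℝ} (hg : ContinuousOn g (Icc 0 1)) {s : ℝ} (hs : s ∈ Icc (0:ℝ) 1) :
    |g s| ≤ unif g := by
  have hbdd : BddAbove (Set.range fun p : Icc (0:ℝ) 1 => |g p.1|) := by
    have h1 : (Set.range fun p : Icc (0:ℝ) 1 => |g p.1|) = (fun t => |g t|) '' Icc 0 1 := by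
      ext y
      simp [Set.mem_image, Subtype.exists, eq_comm]
    rw [h1]
    exact (isCompact_Icc.image_of_continuousOn hg.abs).bddAbove
  exact le_ciSup hbdd ⟨s, hs⟩

lemma supT_nonneg {T : ℝ} {f : ℝ → ℝ} : 0 ≤ supT T f :=
  Real.iSup_nonneg fun _ => abs_nonneg _

lemma Jmax_nonneg {T : ℝ} {x : ℝ → ℝ} : 0 ≤ Jmax T x :=
  Real.iSup_nonneg fun _ => abs_nonneg _

lemma IsCadlagOn.bounded {T : ℝ} {x : ℝ → ℝ} (hx : IsCadlagOn T x) :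
    ∃ M : ℝ, ∀ t ∈ Icc (0:ℝ) T, |x t| ≤ M := by
  have hloc : ∀ t : ℝ, ∃ U : Set ℝ, U ∈ 𝓝 t ∧ ∃ M : ℝ, ∀ w ∈ U ∩ Icc (0:ℝ) T, |x w| ≤ M := by
    intro t
    by_cases ht : t ∈ Icc (0:ℝ) T
    · have hright : ∃ b, t < b ∧ ∃ Mr : ℝ, ∀ w, t ≤ w → w < b → w ≤ T → |x w| ≤ Mr := by
        rcases eq_or_lt_of_le ht.2 with rfl | htT
        · refine ⟨t + 1, by linarith, |x t|, fun w h1 h2 h3 => ?_⟩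
          have hw : w = t := le_antisymm h3 h1
          rw [hw]
        · have h1 := hx.1 t ⟨ht.1, htT⟩
          have h2 : ∀ᶠ w in 𝓝[≥] t, |x w - x t| < 1 := by
            have := Metric.tendsto_nhds.mp h1 1 one_pos
            simpa [Real.dist_eq] using this
          obtain ⟨b, hb, hsub⟩ := mem_nhdsGE_iff_exists_Ico_subset.mp h2
          refine ⟨b, hb, |x t| + 1, fun w h1' h2' _ => ?_⟩
          have hw := hsub ⟨h1', h2'⟩
          have : |x w| - |x t| ≤ |x w - x t| := by
            have := abs_sub_abs_le_abs_sub (x w) (x t)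
            linarith
          simp only [Set.mem_setOf_eq] at hw
          linarith
      have hleft : ∃ a, a < t ∧ ∃ Ml : ℝ, ∀ w, a < w → w < t → 0 ≤ w → |x w| ≤ Ml := by
        rcases eq_or_lt_of_le ht.1 with h0 | h0t
        · refine ⟨t - 1, by linarith, 0, fun w h1 h2 h3 => ?_⟩
          rw [← h0] at h2
          exact absurd (lt_of_le_of_lt h3 h2) (lt_irrefl _)
        · have h1 := hx.tendsto_leftL ⟨h0t, ht.2⟩
          have h2 : ∀ᶠ w in 𝓝[<] t, |x w - leftL x t| < 1 := by
            have := Metric.tendsto_nhds.mp h1 1 one_pos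
            simpa [Real.dist_eq] using this
          obtain ⟨a, ha, hsub⟩ := mem_nhdsLT_iff_exists_Ioo_subset.mp h2
          refine ⟨a, ha, |leftL x t| + 1, fun w h1' h2' _ => ?_⟩
          have hw := hsub ⟨h1', h2'⟩
          simp only [Set.mem_setOf_eq] at hw
          have : |x w| - |leftL x t| ≤ |x w - leftL x t| := by
            have := abs_sub_abs_le_abs_sub (x w) (leftL x t)
            linarith
          linarith
      obtain ⟨b, hb, Mr, hMr⟩ := hright
      obtain ⟨a, ha, Ml, hMl⟩ := hleft
      refine ⟨Ioo a b, Ioo_mem_nhds ha hb, max Mr Ml, ?_⟩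
      rintro w ⟨⟨hw1, hw2⟩, hw3, hw4⟩
      rcases le_or_gt t w with h | h
      · exact le_trans (hMr w h hw2 hw4) (le_max_left _ _)
      · exact le_trans (hMl w hw1 h hw3) (le_max_right _ _)
    · rw [Set.mem_Icc, not_and_or] at ht
      rcases ht with ht | ht
      · push_neg at ht
        refine ⟨Iio 0, Iio_mem_nhds ht, 0, ?_⟩
        rintro w ⟨hw1, hw2, -⟩
        exact absurd (lt_of_le_of_lt hw2 hw1) (lt_irrefl _)
      · push_neg at ht
        refine ⟨Ioi T, Ioi_mem_nhds ht, 0, ?_⟩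
        rintro w ⟨hw1, -, hw2⟩
        exact absurd (lt_of_le_of_lt hw2 hw1) (lt_irrefl _)
  choose U hU M hM using hloc
  obtain ⟨F, -, hF⟩ := isCompact_Icc.elim_nhds_subcover U (fun t _ => hU t)
  classical
  refine ⟨∑ i ∈ F, |M i|, fun t ht => ?_⟩
  obtain ⟨j, hj, hjt⟩ := Set.mem_iUnion₂.mp (hF ht)
  calc |x t| ≤ M j := hM j t ⟨hjt, ht⟩
    _ ≤ |M j| := le_abs_self _
    _ ≤ ∑ i ∈ F, |M i| := Finset.single_le_sum (fun i _ => abs_nonneg (M i)) hj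

lemma IsCadlagOn.leftL_bounded {T : ℝ} {x : ℝ → ℝ} (hT : 0 < T) (hx : IsCadlagOn T x) :
    ∃ M : ℝ, ∀ t ∈ Icc (0:ℝ) T, |x t| ≤ M ∧ |leftL x t| ≤ M := by
  obtain ⟨M, hM⟩ := hx.bounded
  refine ⟨M, fun t ht => ⟨hM t ht, ?_⟩⟩
  rcases eq_or_ne t 0 with rfl | h0
  · rw [leftL, if_pos rfl]
    exact hM 0 (left_mem_Icc.2 hT.le)
  · have htpos : 0 < t := lt_of_le_of_ne ht.1 (Ne.symm h0)
    have h1 := (hx.tendsto_leftL ⟨htpos, ht.2⟩).abs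
    refine le_of_tendsto h1 ?_
    filter_upwards [Ioo_mem_nhdsLT htpos] with w hw
    exact hM w ⟨hw.1.le, hw.2.le.trans ht.2⟩

lemma jump_le_Jmax {T : ℝ} {x : ℝ → ℝ} (hT : 0 < T) (hx : IsCadlagOn T x) {t : ℝ}
    (ht : t ∈ Icc (0:ℝ) T) : |x t - leftL x t| ≤ Jmax T x := by
  obtain ⟨M, hM⟩ := hx.leftL_bounded hT
  have hbdd : BddAbove (Set.range fun p : Icc (0:ℝ) T => |x p.1 - leftL x p.1|) := by
    refine ⟨M + M, ?_⟩
    rintro y ⟨p, rfl⟩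
    calc |x p.1 - leftL x p.1| ≤ |x p.1| + |leftL x p.1| := abs_sub _ _
      _ ≤ M + M := add_le_add (hM p.1 p.2).1 (hM p.1 p.2).2
  exact le_ciSup hbdd ⟨t, ht⟩



lemma leftL_zero {x : ℝ → ℝ} : leftL x 0 = x 0 := if_pos rfl

lemma IsCadlagOn.countable_jumps {T : ℝ} {x : ℝ → ℝ} (hx : IsCadlagOn T x) :
    Set.Countable {t : ℝ | 0 < t ∧ t ≤ T ∧ x t ≠ leftL x t} := by
  classical
  have hsub : {t : ℝ | 0 < t ∧ t ≤ T ∧ x t ≠ leftL x t} ⊆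
      {T} ∪ ⋃ n : ℕ, {t : ℝ | 0 < t ∧ t < T ∧ 1/(n+1) < |x t - leftL x t|} := by
    intro t ht
    rcases eq_or_lt_of_le ht.2.1 with h | h
    · exact Or.inl h
    · refine Or.inr (mem_iUnion.2 ?_)
      have hpos : 0 < |x t - leftL x t| := abs_pos.mpr (sub_ne_zero.mpr ht.2.2)
      obtain ⟨n, hn⟩ := exists_nat_one_div_lt hpos
      exact ⟨n, ht.1, h, by exact_mod_cast hn⟩
  refine Set.Countable.mono hsub (Set.Countable.union (Set.countable_singleton T)
    (Set.countable_iUnion fun n => ?_))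
  set ε : ℝ := 1/(n+1) with hεdef
  have hεpos : 0 < ε := by positivity
  set E := {t : ℝ | 0 < t ∧ t < T ∧ ε < |x t - leftL x t|} with hE
  have hwin : ∀ t ∈ E, ∃ p : ℚ, (p : ℝ) < t ∧
      ∀ a b : ℝ, (p:ℝ) < a → a < t → (p:ℝ) < b → b < t → |x a - x b| ≤ ε/2 := by
    intro t ht
    obtain ⟨ht0, htT, _⟩ := ht
    have hl := hx.tendsto_leftL ⟨ht0, htT.le⟩
    have hlev : ∀ᶠ v in 𝓝[<] t, |x v - leftL x t| < ε/4 := by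
      have := Metric.tendsto_nhds.mp hl (ε/4) (by positivity)
      simpa [Real.dist_eq] using this
    obtain ⟨l, hl2, hlsub⟩ := mem_nhdsLT_iff_exists_Ioo_subset.mp hlev
    obtain ⟨p, hp1, hp2⟩ := exists_rat_btwn (show l < t from hl2)
    refine ⟨p, hp2, fun a b ha1 ha2 hb1 hb2 => ?_⟩
    have haa : a ∈ Ioo l t := ⟨lt_trans hp1 ha1, ha2⟩
    have hbb : b ∈ Ioo l t := ⟨lt_trans hp1 hb1, hb2⟩
    have h1 := hlsub haa
    have h2 := hlsub hbb
    simp only [Set.mem_setOf_eq] at h1 h2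
    calc |x a - x b| ≤ |x a - leftL x t| + |leftL x t - x b| := abs_sub_le _ _ _
      _ ≤ ε/4 + ε/4 := by
          rw [abs_sub_comm (leftL x t) (x b)]
          exact add_le_add h1.le h2.le
      _ = ε/2 := by ring
  choose! f hf1 hf3 using hwin
  have hkey : ∀ s ∈ E, ∀ s' ∈ E, f s = f s' → s' < s → False := by
    intro s hs s' hs' hff hlt
    have hps' : (f s : ℝ) < s' := by rw [hff]; exact hf1 s' hs'
    have hs'0 : 0 < s' := hs'.1
    have hl := hx.tendsto_leftL ⟨hs'0, hs'.2.1.le⟩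
    have hbound : |leftL x s' - x s'| ≤ ε/2 := by
      have htend : Tendsto (fun v => |x v - x s'|) (𝓝[<] s') (𝓝 (|leftL x s' - x s'|)) :=
        ((hl.sub tendsto_const_nhds).abs)
      refine le_of_tendsto htend ?_
      filter_upwards [Ioo_mem_nhdsLT hps'] with v hv
      exact hf3 s hs v s' hv.1 (lt_trans hv.2 hlt) hps' hlt
    have := hs'.2.2
    rw [abs_sub_comm] at this
    linarith
  have hmapsto : Set.MapsTo f E (Set.univ : Set ℚ) := fun t _ => Set.mem_univ _
  refine hmapsto.countable_of_injOn ?_ Set.countable_univ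
  intro a ha b hb hab
  rcases lt_trichotomy a b with h | h | h
  · exact absurd (hkey b hb a ha hab.symm h) not_false
  · exact h
  · exact absurd (hkey a ha b hb hab h) not_false

namespace RepCon

variable (x : ℝ → ℝ) (T : ℝ) (e : ℕ → ℝ)

noncomputable def jw (k : ℕ) : ℝ :=
  if 0 < e k ∧ e k ≤ T ∧ x (e k) ≠ leftL x (e k) then (1/2:ℝ)^k else 0

noncomputable def S (t : ℝ) : ℝ := ∑' k, if e k ≤ t then jw x T e k else 0

noncomputable def Sm (t : ℝ) : ℝ := ∑' k, if e k < t then jw x T e k else 0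

noncomputable def G (t : ℝ) : ℝ := t + S x T e t

noncomputable def Gm (t : ℝ) : ℝ := t + Sm x T e t

noncomputable def c : ℝ := G x T e T - G x T e 0

noncomputable def rr (s : ℝ) : ℝ :=
  sInf {t : ℝ | t ∈ Icc 0 T ∧ G x T e 0 + s * c x T e ≤ G x T e t}

noncomputable def uu (s : ℝ) : ℝ :=
  if Gm x T e (rr x T e s) < G x T e (rr x T e s) then
    x (rr x T e s) + ((G x T e 0 + s * c x T e - G x T e (rr x T e s)) /
      (G x T e (rr x T e s) - Gm x T e (rr x T e s))) * (x (rr x T e s) - leftL x (rr x T e s))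
  else x (rr x T e s)

lemma jw_nonneg (k : ℕ) : 0 ≤ jw x T e k := by
  rw [jw]; split <;> positivity

lemma jw_le (k : ℕ) : jw x T e k ≤ (1/2:ℝ)^k := by
  rw [jw]; split
  · exact le_refl _
  · positivity

lemma ind_nonneg (P : ℕ → Prop) [DecidablePred P] (k : ℕ) :
    0 ≤ (if P k then jw x T e k else 0) := by
  split
  · exact jw_nonneg x T e k
  · exact le_refl 0

lemma ind_le (P : ℕ → Prop) [DecidablePred P] (k : ℕ) :
    (if P k then jw x T e k else 0) ≤ (1/2:ℝ)^k := by
  split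
  · exact jw_le x T e k
  · positivity

lemma summable_ind (P : ℕ → Prop) [DecidablePred P] :
    Summable (fun k => if P k then jw x T e k else 0) :=
  Summable.of_nonneg_of_le (ind_nonneg x T e P) (ind_le x T e P) summable_geometric_two

lemma S_mono {t₁ t₂ : ℝ} (h : t₁ ≤ t₂) : S x T e t₁ ≤ S x T e t₂ := by
  apply Summable.tsum_le_tsum _ (summable_ind x T e (fun k => e k ≤ t₁))
    (summable_ind x T e (fun k => e k ≤ t₂))
  intro k
  by_cases hk : e k ≤ t₁
  · rw [if_pos hk, if_pos (hk.trans h)]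
  · rw [if_neg hk]
    exact ind_nonneg x T e (fun k => e k ≤ t₂) k

lemma S_le_Sm {t₁ t₂ : ℝ} (h : t₁ < t₂) : S x T e t₁ ≤ Sm x T e t₂ := by
  apply Summable.tsum_le_tsum _ (summable_ind x T e (fun k => e k ≤ t₁))
    (summable_ind x T e (fun k => e k < t₂))
  intro k
  by_cases hk : e k ≤ t₁
  · rw [if_pos hk, if_pos (lt_of_le_of_lt hk h)]
  · rw [if_neg hk]
    exact ind_nonneg x T e (fun k => e k < t₂) k

lemma Sm_le_S (t : ℝ) : Sm x T e t ≤ S x T e t := by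
  apply Summable.tsum_le_tsum _ (summable_ind x T e (fun k => e k < t))
    (summable_ind x T e (fun k => e k ≤ t))
  intro k
  by_cases hk : e k < t
  · rw [if_pos hk, if_pos hk.le]
  · rw [if_neg hk]
    exact ind_nonneg x T e (fun k => e k ≤ t) k

lemma S_nonneg (t : ℝ) : 0 ≤ S x T e t :=
  tsum_nonneg (ind_nonneg x T e (fun k => e k ≤ t))

lemma Sm_nonneg (t : ℝ) : 0 ≤ Sm x T e t :=
  tsum_nonneg (ind_nonneg x T e (fun k => e k < t))

lemma G_strictMono : StrictMono (G x T e) := by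
  intro t₁ t₂ h
  have := S_mono x T e h.le
  rw [G, G]
  linarith

lemma G_lt_Gm {t₁ t₂ : ℝ} (h : t₁ < t₂) : G x T e t₁ < Gm x T e t₂ := by
  have := S_le_Sm x T e h
  rw [G, Gm]
  linarith

lemma Gm_le_G (t : ℝ) : Gm x T e t ≤ G x T e t := by
  have := Sm_le_S x T e t
  rw [G, Gm]
  linarith

lemma c_pos (hT : 0 < T) : 0 < c x T e := by
  rw [c, G, G]
  have h1 := S_mono x T e hT.le
  linarith

/-- Jump of `G` at a jump point of `x` that is enumerated by `e`. -/
lemma Gm_lt_G_of_jump {t : ℝ} (ht : 0 < t ∧ t ≤ T ∧ x t ≠ leftL x t) {k₀ : ℕ}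
    (hk : e k₀ = t) : Gm x T e t < G x T e t := by
  have hsplit : ∀ k, (if e k ≤ t then jw x T e k else 0) =
      (if e k < t then jw x T e k else 0) + (if e k = t then jw x T e k else 0) := by
    intro k
    rcases lt_trichotomy (e k) t with h | h | h
    · rw [if_pos h.le, if_pos h, if_neg (ne_of_lt h), add_zero]
    · rw [if_pos h.le, if_neg (lt_irrefl t ∘ (h ▸ id)), if_pos h, zero_add]
    · rw [if_neg (not_le.mpr h), if_neg (not_lt.mpr h.le), if_neg (ne_of_gt h), add_zero]
  have hSsum : S x T e t = Sm x T e t + ∑' k, (if e k = t then jw x T e k else 0) := by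
    rw [S, Sm]
    rw [tsum_congr hsplit]
    exact Summable.tsum_add (summable_ind x T e (fun k => e k < t))
      (summable_ind x T e (fun k => e k = t))
  have hpos : (0:ℝ) < ∑' k, (if e k = t then jw x T e k else 0) := by
    have hterm : (0:ℝ) < (if e k₀ = t then jw x T e k₀ else 0) := by
      rw [if_pos hk, jw, hk, if_pos ht]
      positivity
    calc (0:ℝ) < (if e k₀ = t then jw x T e k₀ else 0) := hterm
      _ ≤ ∑' k, (if e k = t then jw x T e k else 0) :=
        Summable.le_tsum (summable_ind x T e (fun k => e k = t)) k₀
          (fun k _ => ind_nonneg x T e (fun k => e k = t) k)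
  rw [Gm, G, hSsum]
  linarith

lemma Gm_eq_G_of_nojump {t : ℝ} (ht : ¬(0 < t ∧ t ≤ T ∧ x t ≠ leftL x t)) :
    Gm x T e t = G x T e t := by
  rw [Gm, G, Sm, S]
  congr 1
  apply tsum_congr
  intro k
  rcases lt_trichotomy (e k) t with h | h | h
  · rw [if_pos h, if_pos h.le]
  · rw [if_neg (lt_irrefl t ∘ (h ▸ id)), if_pos h.le, jw, h]
    rw [if_neg ht]
  · rw [if_neg (not_lt.mpr h.le), if_neg (not_le.mpr h)]

/-- Choice of a cutoff `N` with small tail. -/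
lemma exists_tail_small {ε : ℝ} (hε : 0 < ε) :
    ∃ N : ℕ, ∑' k, (1/2:ℝ)^(k+N) < ε := by
  obtain ⟨N, hN⟩ := exists_pow_lt_of_lt_one (show (0:ℝ) < ε/2 by linarith)
    (show (1/2:ℝ) < 1 by norm_num)
  refine ⟨N, ?_⟩
  have h1 : ∀ k : ℕ, (1/2:ℝ)^(k+N) = (1/2:ℝ)^k * (1/2:ℝ)^N := fun k => pow_add _ _ _
  rw [tsum_congr h1, tsum_mul_right, tsum_geometric_two]
  have hpow : (0:ℝ) < (1/2:ℝ)^N := by positivity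
  nlinarith

/-- Approximation of `Sm t` from the left by values `S t'`, `t' < t`. -/
lemma left_approx (t : ℝ) {ε : ℝ} (hε : 0 < ε) :
    ∃ t', t - ε < t' ∧ t' < t ∧ Sm x T e t ≤ S x T e t' + ε := by
  classical
  obtain ⟨N, hN⟩ := exists_tail_small (show (0:ℝ) < ε/2 by linarith)
  set F := (Finset.range N).filter (fun k => e k < t) with hF
  set m : ℝ := if h : F.Nonempty then max (t - ε/2) (F.sup' h e) else t - ε/2 with hm
  have hmlt : m < t := by
    rw [hm]
    split
    · rename_i h
      rw [max_lt_iff]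
      refine ⟨by linarith, ?_⟩
      rw [Finset.sup'_lt_iff]
      intro k hk
      exact (Finset.mem_filter.mp hk).2
    · linarith
  have hmge : t - ε/2 ≤ m := by
    rw [hm]
    split
    · exact le_max_left _ _
    · exact le_refl _
  have hmem : ∀ k < N, e k < t → e k ≤ m := by
    intro k hk hkt
    have hkF : k ∈ F := Finset.mem_filter.mpr ⟨Finset.mem_range.mpr hk, hkt⟩
    rw [hm]
    rw [dif_pos ⟨k, hkF⟩]
    exact le_max_of_le_right (Finset.le_sup' e hkF)
  refine ⟨m, by linarith, hmlt, ?_⟩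
  have hsum := Summable.sum_add_tsum_nat_add (f := fun k => if e k < t then jw x T e k else 0) N
    (summable_ind x T e (fun k => e k < t))
  have h1 : ∑ k ∈ Finset.range N, (if e k < t then jw x T e k else 0) ≤ S x T e m := by
    have h2 : ∑ k ∈ Finset.range N, (if e k < t then jw x T e k else 0) ≤
        ∑ k ∈ Finset.range N, (if e k ≤ m then jw x T e k else 0) := by
      apply Finset.sum_le_sum
      intro k hk
      by_cases hkt : e k < t
      · rw [if_pos hkt, if_pos (hmem k (Finset.mem_range.mp hk) hkt)]
      · rw [if_neg hkt]
        exact ind_nonneg x T e (fun k => e k ≤ m) k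
    refine h2.trans ?_
    exact Summable.sum_le_tsum _ (fun k _ => ind_nonneg x T e (fun k => e k ≤ m) k)
      (summable_ind x T e (fun k => e k ≤ m))
  have h3 : ∑' k, (if e (k+N) < t then jw x T e (k+N) else 0) ≤ ε/2 := by
    refine le_trans ?_ hN.le
    apply Summable.tsum_le_tsum (fun k => ind_le x T e (fun k => e k < t) (k+N))
      ((summable_ind x T e (fun k => e k < t)).comp_injective (add_left_injective N))
      (summable_geometric_two.comp_injective (add_left_injective N))
  have : Sm x T e t = ∑ k ∈ Finset.range N, (if e k < t then jw x T e k else 0) +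
      ∑' k, (if e (k+N) < t then jw x T e (k+N) else 0) := by
    rw [Sm, hsum]
  rw [this]
  linarith

/-- Approximation of `S t` from the right by values `S t''`, `t'' > t`. -/
lemma right_approx (t : ℝ) {ε : ℝ} (hε : 0 < ε) :
    ∃ t'', t < t'' ∧ t'' < t + ε ∧ S x T e t'' ≤ S x T e t + ε := by
  classical
  obtain ⟨N, hN⟩ := exists_tail_small (show (0:ℝ) < ε/2 by linarith)
  set F := (Finset.range N).filter (fun k => t < e k) with hF
  set m : ℝ := if h : F.Nonempty then min (t + ε/2) (F.inf' h e) else t + ε/2 with hm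
  have hmgt : t < m := by
    rw [hm]
    split
    · rename_i h
      rw [lt_min_iff]
      refine ⟨by linarith, ?_⟩
      rw [Finset.lt_inf'_iff]
      intro k hk
      exact (Finset.mem_filter.mp hk).2
    · linarith
  have hmle : m ≤ t + ε/2 := by
    rw [hm]
    split
    · exact min_le_left _ _
    · exact le_refl _
  set t'' : ℝ := (t + m)/2 with ht''
  have ht''1 : t < t'' := by rw [ht'']; linarith
  have ht''2 : t'' < m := by rw [ht'']; linarith
  have hmem : ∀ k < N, ¬(e k ≤ t) → ¬(e k ≤ t'') := by
    intro k hk hkt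
    push_neg at hkt ⊢
    have hkF : k ∈ F := Finset.mem_filter.mpr ⟨Finset.mem_range.mpr hk, hkt⟩
    have : m ≤ e k := by
      rw [hm, dif_pos ⟨k, hkF⟩]
      exact le_trans (min_le_right _ _) (Finset.inf'_le e hkF)
    linarith
  refine ⟨t'', ht''1, by linarith, ?_⟩
  have hsum := Summable.sum_add_tsum_nat_add (f := fun k => if e k ≤ t'' then jw x T e k else 0) N
    (summable_ind x T e (fun k => e k ≤ t''))
  have h1 : ∑ k ∈ Finset.range N, (if e k ≤ t'' then jw x T e k else 0) ≤ S x T e t := by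
    have h2 : ∑ k ∈ Finset.range N, (if e k ≤ t'' then jw x T e k else 0) ≤
        ∑ k ∈ Finset.range N, (if e k ≤ t then jw x T e k else 0) := by
      apply Finset.sum_le_sum
      intro k hk
      by_cases hkt : e k ≤ t
      · rw [if_pos hkt, if_pos (hkt.trans ht''1.le)]
      · rw [if_neg (hmem k (Finset.mem_range.mp hk) hkt), if_neg hkt]
    refine h2.trans ?_
    exact Summable.sum_le_tsum _ (fun k _ => ind_nonneg x T e (fun k => e k ≤ t) k)
      (summable_ind x T e (fun k => e k ≤ t))
  have h3 : ∑' k, (if e (k+N) ≤ t'' then jw x T e (k+N) else 0) ≤ ε/2 := by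
    refine le_trans ?_ hN.le
    apply Summable.tsum_le_tsum (fun k => ind_le x T e (fun k => e k ≤ t'') (k+N))
      ((summable_ind x T e (fun k => e k ≤ t'')).comp_injective (add_left_injective N))
      (summable_geometric_two.comp_injective (add_left_injective N))
  have : S x T e t'' = ∑ k ∈ Finset.range N, (if e k ≤ t'' then jw x T e k else 0) +
      ∑' k, (if e (k+N) ≤ t'' then jw x T e (k+N) else 0) := by
    rw [S, hsum]
  rw [this]
  linarith

lemma A_bddBelow (s : ℝ) :
    BddBelow {t : ℝ | t ∈ Icc 0 T ∧ G x T e 0 + s * c x T e ≤ G x T e t} :=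
  ⟨0, fun t ht => ht.1.1⟩

lemma T_mem_A (hT : 0 < T) {s : ℝ} (hs : s ≤ 1) :
    T ∈ {t : ℝ | t ∈ Icc 0 T ∧ G x T e 0 + s * c x T e ≤ G x T e t} := by
  refine ⟨right_mem_Icc.mpr hT.le, ?_⟩
  have hc := (c_pos x T e hT).le
  have h1 : s * c x T e ≤ c x T e := by nlinarith
  have h2 : c x T e = G x T e T - G x T e 0 := rfl
  linarith

lemma rr_le (hT : 0 < T) {s t : ℝ} (ht : t ∈ Icc 0 T)
    (h : G x T e 0 + s * c x T e ≤ G x T e t) : rr x T e s ≤ t :=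
  csInf_le (A_bddBelow x T e s) ⟨ht, h⟩

lemma le_rr (hT : 0 < T) {s t : ℝ} (hs : s ≤ 1) (h : Gm x T e t ≤ G x T e 0 + s * c x T e) :
    t ≤ rr x T e s := by
  apply le_csInf ⟨T, T_mem_A x T e hT hs⟩
  rintro t' ⟨ht', hGt'⟩
  by_contra hcon
  push_neg at hcon
  have := G_lt_Gm x T e hcon
  linarith

lemma rr_mem_Icc (hT : 0 < T) {s : ℝ} (hs : s ∈ Icc (0:ℝ) 1) : rr x T e s ∈ Icc (0:ℝ) T := by
  constructor
  · apply le_csInf ⟨T, T_mem_A x T e hT hs.2⟩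
    rintro t' ⟨ht', -⟩
    exact ht'.1
  · exact rr_le x T e hT (right_mem_Icc.mpr hT.le) (T_mem_A x T e hT hs.2).2

lemma rr_monoOn (hT : 0 < T) : MonotoneOn (rr x T e) (Icc (0:ℝ) 1) := by
  intro s₁ hs₁ s₂ hs₂ h
  apply csInf_le_csInf (A_bddBelow x T e s₁) ⟨T, T_mem_A x T e hT hs₂.2⟩
  rintro t ⟨ht, hGt⟩
  refine ⟨ht, le_trans ?_ hGt⟩
  have hc := (c_pos x T e hT).le
  nlinarith

lemma rr_zero (hT : 0 < T) : rr x T e 0 = 0 := by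
  apply le_antisymm
  · exact rr_le x T e hT (left_mem_Icc.mpr hT.le) (by rw [zero_mul]; linarith)
  · exact (rr_mem_Icc x T e hT (left_mem_Icc.mpr zero_le_one)).1

lemma beta_mem (hT : 0 < T) {t : ℝ} (ht : t ∈ Icc 0 T) :
    (G x T e t - G x T e 0) / c x T e ∈ Icc (0:ℝ) 1 := by
  have hc := c_pos x T e hT
  constructor
  · apply div_nonneg _ hc.le
    have := (G_strictMono x T e).monotone ht.1
    linarith
  · rw [div_le_one hc, c]
    have := (G_strictMono x T e).monotone ht.2
    linarith

lemma rr_beta (hT : 0 < T) {t : ℝ} (ht : t ∈ Icc 0 T) :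
    rr x T e ((G x T e t - G x T e 0) / c x T e) = t := by
  have hc := c_pos x T e hT
  have hmul : (G x T e t - G x T e 0) / c x T e * c x T e = G x T e t - G x T e 0 :=
    div_mul_cancel₀ _ hc.ne'
  apply le_antisymm
  · apply rr_le x T e hT ht
    rw [hmul]; linarith
  · apply le_rr x T e hT (beta_mem x T e hT ht).2
    rw [hmul]
    have := Gm_le_G x T e t
    linarith

lemma rr_one (hT : 0 < T) : rr x T e 1 = T := by
  have h1 : (G x T e T - G x T e 0) / c x T e = 1 := by
    rw [c]; exact div_self (by have := c_pos x T e hT; rw [c] at this; linarith)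
  have := rr_beta x T e hT (right_mem_Icc.mpr hT.le)
  rwa [h1] at this

lemma rr_eq_of_between (hT : 0 < T) {s t : ℝ} (ht : t ∈ Icc 0 T) (hs : s ≤ 1)
    (h1 : Gm x T e t ≤ G x T e 0 + s * c x T e) (h2 : G x T e 0 + s * c x T e ≤ G x T e t) :
    rr x T e s = t :=
  le_antisymm (rr_le x T e hT ht h2) (le_rr x T e hT hs h1)

/-- If `rr s = t` then `s ≤ β t`. -/
lemma le_beta_of_rr_eq (hT : 0 < T) {s t : ℝ} (hs : s ∈ Icc (0:ℝ) 1)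
    (heq : rr x T e s = t) : G x T e 0 + s * c x T e ≤ G x T e t := by
  have htIcc : t ∈ Icc (0:ℝ) T := heq ▸ rr_mem_Icc x T e hT hs
  by_contra hcon
  push_neg at hcon
  rcases eq_or_lt_of_le htIcc.2 with hTt | htT
  · rw [hTt] at hcon
    have hc := c_pos x T e hT
    have h1 : s * c x T e ≤ c x T e := by nlinarith [hs.2]
    have h2 : c x T e = G x T e T - G x T e 0 := rfl
    linarith
  · set Δ := G x T e 0 + s * c x T e - G x T e t with hΔ
    have hΔpos : 0 < Δ := by rw [hΔ]; linarith
    have hεpos : 0 < min (Δ/3) (T - t) := lt_min (by linarith) (by linarith)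
    obtain ⟨t'', ht''1, ht''2, ht''3⟩ := right_approx x T e t hεpos
    have hG'' : G x T e t'' < G x T e 0 + s * c x T e := by
      have h5 : t'' < t + Δ/3 := lt_of_lt_of_le ht''2 (by
        have := min_le_left (Δ/3) (T - t); linarith)
      have h6 : S x T e t'' ≤ S x T e t + Δ/3 := le_trans ht''3 (by
        have := min_le_left (Δ/3) (T - t); linarith)
      have e1 : G x T e t'' = t'' + S x T e t'' := rfl
      have e2 : G x T e t = t + S x T e t := rfl
      linarith
    have hge : t'' ≤ rr x T e s := by
      apply le_csInf ⟨T, T_mem_A x T e hT hs.2⟩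
      rintro t' ⟨ht', hGt'⟩
      by_contra hcon2
      push_neg at hcon2
      have := (G_strictMono x T e).monotone hcon2.le
      linarith
    rw [heq] at hge
    linarith

/-- If `rr s = t` then `σ t ≤ s`. -/
lemma sigma_le_of_rr_eq (hT : 0 < T) {s t : ℝ} (hs : s ∈ Icc (0:ℝ) 1)
    (heq : rr x T e s = t) : Gm x T e t ≤ G x T e 0 + s * c x T e := by
  have htIcc : t ∈ Icc (0:ℝ) T := heq ▸ rr_mem_Icc x T e hT hs
  by_contra hcon
  push_neg at hcon
  have hc := c_pos x T e hT
  have hsc : 0 ≤ s * c x T e := mul_nonneg hs.1 hc.le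
  have ht0 : 0 < t := by
    rcases eq_or_lt_of_le htIcc.1 with h0t | h0t
    · exfalso
      rw [← h0t] at hcon
      have e1 : Gm x T e 0 = 0 + Sm x T e 0 := rfl
      have e2 : G x T e 0 = 0 + S x T e 0 := rfl
      have := Sm_le_S x T e 0
      linarith
    · exact h0t
  set Δ := Gm x T e t - (G x T e 0 + s * c x T e) with hΔ
  have hΔpos : 0 < Δ := by rw [hΔ]; linarith
  have hεpos : 0 < min (Δ/3) t := lt_min (by linarith) ht0
  obtain ⟨t', ht'1, ht'2, ht'3⟩ := left_approx x T e t hεpos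
  have hG' : G x T e 0 + s * c x T e < G x T e t' := by
    have h7 := min_le_left (Δ/3) t
    have h6 : Sm x T e t ≤ S x T e t' + Δ/3 := le_trans ht'3 (by linarith)
    have e1 : G x T e t' = t' + S x T e t' := rfl
    have e2 : Gm x T e t = t + Sm x T e t := rfl
    linarith [ht'1]
  have ht'Icc : t' ∈ Icc (0:ℝ) T := by
    constructor
    · have := min_le_right (Δ/3) t
      linarith
    · linarith [htIcc.2]
  have : rr x T e s ≤ t' := rr_le x T e hT ht'Icc hG'.le
  rw [heq] at this
  linarith

lemma rr_continuousOn (hT : 0 < T) : ContinuousOn (rr x T e) (Icc (0:ℝ) 1) := by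
  set R : ℝ → ℝ := fun s => if s < 0 then s else if 1 < s then T + (s - 1) else rr x T e s
    with hR
  have hRicc : ∀ s ∈ Icc (0:ℝ) 1, R s = rr x T e s := by
    intro s hs
    simp only [hR]
    rw [if_neg (not_lt.mpr hs.1), if_neg (not_lt.mpr hs.2)]
  have hmono : Monotone R := by
    intro a b hab
    rcases lt_or_ge a 0 with ha | ha
    · simp only [hR]
      rw [if_pos ha]
      rcases lt_or_ge b 0 with hb | hb
      · rw [if_pos hb]; exact hab
      · rw [if_neg (not_lt.mpr hb)]
        rcases lt_or_ge 1 b with hb1 | hb1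
        · rw [if_pos hb1]; linarith
        · rw [if_neg (not_lt.mpr hb1)]
          have := (rr_mem_Icc x T e hT ⟨hb, hb1⟩).1
          linarith
    · have hb : (0:ℝ) ≤ b := le_trans ha hab
      simp only [hR]
      rw [if_neg (not_lt.mpr ha), if_neg (not_lt.mpr hb)]
      rcases lt_or_ge 1 a with ha1 | ha1
      · rw [if_pos ha1, if_pos (lt_of_lt_of_le ha1 hab)]
        linarith
      · rw [if_neg (not_lt.mpr ha1)]
        rcases lt_or_ge 1 b with hb1 | hb1
        · rw [if_pos hb1]
          have := (rr_mem_Icc x T e hT ⟨ha, ha1⟩).2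
          linarith
        · rw [if_neg (not_lt.mpr hb1)]
          exact rr_monoOn x T e hT ⟨ha, ha1⟩ ⟨hb, hb1⟩ hab
  have hsurj : Function.Surjective R := by
    intro y
    rcases lt_or_ge y 0 with hy | hy
    · exact ⟨y, by simp only [hR]; rw [if_pos hy]⟩
    · rcases le_or_gt y T with hyT | hyT
      · refine ⟨(G x T e y - G x T e 0) / c x T e, ?_⟩
        rw [hRicc _ (beta_mem x T e hT ⟨hy, hyT⟩)]
        exact rr_beta x T e hT ⟨hy, hyT⟩
      · refine ⟨y - T + 1, ?_⟩
        simp only [hR]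
        rw [if_neg (by linarith), if_pos (by linarith)]
        ring
  exact ((hmono.continuous_of_surjective hsurj).continuousOn).congr
    (fun s hs => (hRicc s hs).symm)

lemma jump_of_Gm_lt_G {t : ℝ} (hj : Gm x T e t < G x T e t) :
    0 < t ∧ t ≤ T ∧ x t ≠ leftL x t := by
  by_contra hn
  rw [Gm_eq_G_of_nojump x T e hn] at hj
  exact lt_irrefl _ hj

lemma G0_le_Gm {t : ℝ} (ht : 0 < t) : G x T e 0 ≤ Gm x T e t := by
  have := S_le_Sm x T e ht
  have e1 : G x T e 0 = 0 + S x T e 0 := rfl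
  have e2 : Gm x T e t = t + Sm x T e t := rfl
  linarith

lemma uu_mem_segment (hT : 0 < T) {s : ℝ} (hs : s ∈ Icc (0:ℝ) 1) :
    uu x T e s ∈ segment ℝ (leftL x (rr x T e s)) (x (rr x T e s)) := by
  rw [uu]
  split
  · rename_i hj
    set t := rr x T e s with htdef
    have hgap : 0 < G x T e t - Gm x T e t := by linarith
    have h1 := le_beta_of_rr_eq x T e hT hs rfl
    have h2 := sigma_le_of_rr_eq x T e hT hs rfl
    rw [← htdef] at h1 h2
    set θ := (G x T e 0 + s * c x T e - G x T e t) / (G x T e t - Gm x T e t) with hθ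
    have hθ0 : θ ≤ 0 := by
      rw [hθ]
      apply div_nonpos_of_nonpos_of_nonneg _ hgap.le
      linarith
    have hθ1 : -1 ≤ θ := by
      rw [hθ]
      rw [le_div_iff₀ hgap]
      linarith
    refine ⟨-θ, 1 + θ, by linarith, by linarith, by ring, ?_⟩
    simp only [smul_eq_mul]
    ring
  · exact right_mem_segment ℝ _ _

lemma uu_order (hT : 0 < T) : ∀ s₁ ∈ Icc (0:ℝ) 1, ∀ s₂ ∈ Icc (0:ℝ) 1, s₁ ≤ s₂ →
    rr x T e s₁ = rr x T e s₂ →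
    0 ≤ (uu x T e s₂ - uu x T e s₁) * (x (rr x T e s₁) - leftL x (rr x T e s₁)) := by
  intro s₁ _ s₂ _ hle hrr
  by_cases hj : Gm x T e (rr x T e s₁) < G x T e (rr x T e s₁)
  · rw [uu, uu, ← hrr, if_pos hj, if_pos hj]
    set t := rr x T e s₁ with htdef
    set d := x t - leftL x t with hd
    set g := G x T e t - Gm x T e t with hg
    have hgpos : 0 < g := by rw [hg]; linarith
    set n₁ := G x T e 0 + s₁ * c x T e - G x T e t with hn₁
    set n₂ := G x T e 0 + s₂ * c x T e - G x T e t with hn₂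
    have hkey : (x t + n₂ / g * d - (x t + n₁ / g * d)) * d = ((n₂ - n₁) / g) * d^2 := by
      field_simp
      ring
    rw [hkey]
    have hnn : 0 ≤ n₂ - n₁ := by
      rw [hn₂, hn₁]
      have := (c_pos x T e hT).le
      nlinarith
    positivity
  · rw [uu, uu, ← hrr, if_neg hj, if_neg hj]
    simp

lemma uu_eq_right {s : ℝ} (h : G x T e 0 + s * c x T e = G x T e (rr x T e s)) :
    uu x T e s = x (rr x T e s) := by
  rw [uu]
  split
  · rw [h, sub_self, zero_div, zero_mul, add_zero]
  · rfl

lemma uu_eq_left {s : ℝ} (hj : Gm x T e (rr x T e s) < G x T e (rr x T e s))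
    (h : G x T e 0 + s * c x T e = Gm x T e (rr x T e s)) :
    uu x T e s = leftL x (rr x T e s) := by
  rw [uu, if_pos hj, h]
  have hne : G x T e (rr x T e s) - Gm x T e (rr x T e s) ≠ 0 := ne_of_gt (by linarith)
  field_simp
  ring

lemma uu_surj (hT : 0 < T)
    (he : {t : ℝ | 0 < t ∧ t ≤ T ∧ x t ≠ leftL x t} ⊆ Set.range e) :
    ∀ t ∈ Icc (0:ℝ) T, ∀ v ∈ segment ℝ (leftL x t) (x t),
      ∃ s ∈ Icc (0:ℝ) 1, rr x T e s = t ∧ uu x T e s = v := by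
  intro t ht v hv
  obtain ⟨a, b, ha, hb, hab, hv⟩ := hv
  have hc := c_pos x T e hT
  have hcne : c x T e ≠ 0 := ne_of_gt hc
  by_cases hj : Gm x T e t < G x T e t
  · have hjump := jump_of_Gm_lt_G x T e hj
    have hgap : 0 < G x T e t - Gm x T e t := by linarith
    have hGm0 : G x T e 0 ≤ Gm x T e t := G0_le_Gm x T e hjump.1
    set s := (G x T e t - G x T e 0 - a * (G x T e t - Gm x T e t)) / c x T e with hs
    have hsc : G x T e 0 + s * c x T e = G x T e t - a * (G x T e t - Gm x T e t) := by
      rw [hs]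
      field_simp
      ring
    have hs1 : Gm x T e t ≤ G x T e 0 + s * c x T e := by
      rw [hsc]
      nlinarith [mul_nonneg hb hgap.le]
    have hs2 : G x T e 0 + s * c x T e ≤ G x T e t := by
      rw [hsc]
      nlinarith [mul_nonneg ha hgap.le]
    have hmono := (G_strictMono x T e).monotone ht.2
    have hsmem : s ∈ Icc (0:ℝ) 1 := by
      constructor
      · rw [hs]
        apply div_nonneg _ hc.le
        nlinarith [mul_nonneg hb hgap.le]
      · rw [hs, div_le_one hc]
        have e3 : c x T e = G x T e T - G x T e 0 := rfl
        nlinarith [mul_nonneg ha hgap.le]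
    have hrt : rr x T e s = t := rr_eq_of_between x T e hT ht hsmem.2 hs1 hs2
    refine ⟨s, hsmem, hrt, ?_⟩
    rw [uu, hrt, if_pos hj, hsc, ← hv]
    simp only [smul_eq_mul]
    have hb1 : b = 1 - a := by linarith
    subst hb1
    field_simp
    ring
  · have hnj : ¬(0 < t ∧ t ≤ T ∧ x t ≠ leftL x t) := by
      intro hcon
      obtain ⟨k₀, hk⟩ := he hcon
      exact hj (Gm_lt_G_of_jump x T e hcon hk)
    have hLt : leftL x t = x t := by
      rcases eq_or_ne t 0 with h0 | h0
      · rw [h0]; exact leftL_zero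
      · by_contra hne
        exact hnj ⟨lt_of_le_of_ne ht.1 (Ne.symm h0), ht.2, fun hgg => hne hgg.symm⟩
    have hveq : v = x t := by
      rw [← hv, hLt]
      simp only [smul_eq_mul]
      linear_combination (x t) * hab
    set s := (G x T e t - G x T e 0) / c x T e with hs
    have hrt := rr_beta x T e hT ht
    rw [← hs] at hrt
    refine ⟨s, beta_mem x T e hT ht, hrt, ?_⟩
    have hsc : G x T e 0 + s * c x T e = G x T e t := by
      rw [hs]
      field_simp
      ring
    have := uu_eq_right x T e (s := s) (by rw [hrt]; exact hsc)
    rw [this, hrt, hveq]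

lemma noJump_eq (he : {t : ℝ | 0 < t ∧ t ≤ T ∧ x t ≠ leftL x t} ⊆ Set.range e)
    {t : ℝ} (hj : ¬ Gm x T e t < G x T e t) (h0 : 0 < t) (hTt : t ≤ T) :
    x t = leftL x t := by
  by_contra hne
  obtain ⟨k₀, hk⟩ := he ⟨h0, hTt, hne⟩
  exact hj (Gm_lt_G_of_jump x T e ⟨h0, hTt, hne⟩ hk)

lemma uu_continuousOn (hT : 0 < T) (hx : IsCadlagOn T x)
    (he : {t : ℝ | 0 < t ∧ t ≤ T ∧ x t ≠ leftL x t} ⊆ Set.range e) :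
    ContinuousOn (uu x T e) (Icc (0:ℝ) 1) := by
  intro s₀ hs₀
  set t₀ := rr x T e s₀ with ht₀def
  have ht₀ : t₀ ∈ Icc (0:ℝ) T := rr_mem_Icc x T e hT hs₀
  have hc := c_pos x T e hT
  rw [Metric.continuousWithinAt_iff]
  intro ε hε
  -- right modulus δ₁
  obtain ⟨δ₁, hδ₁pos, hP1⟩ : ∃ δ₁ > 0, ∀ τ, t₀ ≤ τ → τ < t₀ + δ₁ → τ ≤ T →
      |x τ - x t₀| ≤ ε/4 := by
    rcases eq_or_lt_of_le ht₀.2 with hTt | htT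
    · refine ⟨1, one_pos, fun τ h1 h2 h3 => ?_⟩
      have hττ : τ = t₀ := le_antisymm (hTt ▸ h3) h1
      rw [hττ, sub_self, abs_zero]
      positivity
    · have h1 := hx.1 t₀ ⟨ht₀.1, htT⟩
      have h2 : ∀ᶠ w in 𝓝[≥] t₀, |x w - x t₀| ≤ ε/4 := by
        have h3 := Metric.tendsto_nhds.mp h1 (ε/4) (by positivity)
        filter_upwards [h3] with w hw
        rw [Real.dist_eq] at hw
        exact hw.le
      obtain ⟨b, hb, hsub⟩ := mem_nhdsGE_iff_exists_Ico_subset.mp h2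
      refine ⟨b - t₀, by simpa using hb, fun τ hτ1 hτ2 _ => ?_⟩
      have := hsub ⟨hτ1, by linarith⟩
      simpa using this
  -- left modulus δ₂
  obtain ⟨δ₂, hδ₂pos, hP2⟩ : ∃ δ₂ > 0, ∀ τ, 0 < t₀ → t₀ - δ₂ < τ → τ < t₀ →
      |x τ - leftL x t₀| ≤ ε/4 := by
    rcases eq_or_lt_of_le ht₀.1 with h0t | h0t
    · exact ⟨1, one_pos, fun τ hpos _ _ => absurd hpos (by rw [← h0t]; exact lt_irrefl 0)⟩
    · have h1 := hx.tendsto_leftL ⟨h0t, ht₀.2⟩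
      have h2 : ∀ᶠ w in 𝓝[<] t₀, |x w - leftL x t₀| ≤ ε/4 := by
        have h3 := Metric.tendsto_nhds.mp h1 (ε/4) (by positivity)
        filter_upwards [h3] with w hw
        rw [Real.dist_eq] at hw
        exact hw.le
      obtain ⟨l, hl, hsub⟩ := mem_nhdsLT_iff_exists_Ioo_subset.mp h2
      refine ⟨t₀ - l, by simpa using hl, fun τ _ hτ1 hτ2 => ?_⟩
      have := hsub ⟨by linarith, hτ2⟩
      simpa using this
  -- left limits near t₀ from the right
  have hP3 : ∀ τ, t₀ < τ → τ < t₀ + δ₁ → τ ≤ T → |leftL x τ - x t₀| ≤ ε/4 := by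
    intro τ h1 h2 h3
    have hτ0 : 0 < τ := lt_of_le_of_lt ht₀.1 h1
    have hl := hx.tendsto_leftL ⟨hτ0, h3⟩
    have htend : Tendsto (fun w => |x w - x t₀|) (𝓝[<] τ) (𝓝 (|leftL x τ - x t₀|)) :=
      (hl.sub tendsto_const_nhds).abs
    refine le_of_tendsto htend ?_
    filter_upwards [Ioo_mem_nhdsLT h1] with w hw
    exact hP1 w hw.1.le (lt_trans hw.2 h2) (le_trans hw.2.le h3)
  -- left limits near t₀ from the left
  have hP4 : ∀ τ, 0 < τ → t₀ - δ₂ < τ → τ < t₀ → |leftL x τ - leftL x t₀| ≤ ε/4 := by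
    intro τ hτ0 h1 h2
    have hτT : τ ≤ T := le_trans h2.le ht₀.2
    have hl := hx.tendsto_leftL ⟨hτ0, hτT⟩
    have htend : Tendsto (fun w => |x w - leftL x t₀|) (𝓝[<] τ)
        (𝓝 (|leftL x τ - leftL x t₀|)) := (hl.sub tendsto_const_nhds).abs
    refine le_of_tendsto htend ?_
    have hmax : max (t₀ - δ₂) 0 < τ := max_lt_iff.mpr ⟨h1, hτ0⟩
    filter_upwards [Ioo_mem_nhdsLT hmax] with w hw
    have hw1 : t₀ - δ₂ < w := lt_of_le_of_lt (le_max_left _ _) hw.1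
    exact hP2 w (lt_trans hτ0 h2) hw1 (lt_trans hw.2 h2)
  -- endpoints of the flat interval of s₀
  have hβmem : G x T e 0 + s₀ * c x T e ≤ G x T e t₀ := le_beta_of_rr_eq x T e hT hs₀ rfl
  have hσmem : Gm x T e t₀ ≤ G x T e 0 + s₀ * c x T e := sigma_le_of_rr_eq x T e hT hs₀ rfl
  set β₀ := (G x T e t₀ - G x T e 0) / c x T e with hβ₀def
  set σ₀ := (Gm x T e t₀ - G x T e 0) / c x T e with hσ₀def
  have hs₀β : s₀ ≤ β₀ := by rw [hβ₀def, le_div_iff₀ hc]; linarith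
  have hσs₀ : σ₀ ≤ s₀ := by rw [hσ₀def, div_le_iff₀ hc]; linarith
  set dP : ℝ := if s₀ < β₀ then β₀ - s₀ else 1 with hdPdef
  have hdPpos : 0 < dP := by
    rw [hdPdef]; split
    · rename_i h; linarith
    · exact one_pos
  set dM : ℝ := if σ₀ < s₀ then s₀ - σ₀ else 1 with hdMdef
  have hdMpos : 0 < dM := by
    rw [hdMdef]; split
    · rename_i h; linarith
    · exact one_pos
  -- modulus for the linear part
  set gap := G x T e t₀ - Gm x T e t₀ with hgapdef
  set D := |x t₀ - leftL x t₀| with hDdef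
  set δ₄ : ℝ := if 0 < gap then (ε/2) * gap / (c x T e * (D + 1)) else 1 with hδ₄def
  have hD0 : 0 ≤ D := abs_nonneg _
  have hδ₄pos : 0 < δ₄ := by
    rw [hδ₄def]; split
    · rename_i h; positivity
    · exact one_pos
  -- r-continuity
  have hrc := rr_continuousOn x T e hT s₀ hs₀
  rw [Metric.continuousWithinAt_iff] at hrc
  obtain ⟨δ₃, hδ₃pos, hδ₃⟩ := hrc (min δ₁ δ₂) (lt_min hδ₁pos hδ₂pos)
  refine ⟨min (min δ₃ δ₄) (min dP dM), by positivity, ?_⟩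
  intro s hsmem hsdist
  rw [Real.dist_eq] at hsdist ⊢
  set τ := rr x T e s with hτdef
  have hτIcc : τ ∈ Icc (0:ℝ) T := rr_mem_Icc x T e hT hsmem
  have hτnear : |τ - t₀| < min δ₁ δ₂ := by
    have hlt : |s - s₀| < δ₃ :=
      lt_of_lt_of_le hsdist (le_trans (min_le_left _ _) (min_le_left _ _))
    have h5 := hδ₃ hsmem (by rw [Real.dist_eq]; exact hlt)
    rw [Real.dist_eq] at h5
    exact h5
  have hτδ₁ : |τ - t₀| < δ₁ := lt_of_lt_of_le hτnear (min_le_left _ _)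
  have hτδ₂ : |τ - t₀| < δ₂ := lt_of_lt_of_le hτnear (min_le_right _ _)
  have hsdP : |s - s₀| < dP := lt_of_lt_of_le hsdist
    (le_trans (min_le_right _ _) (min_le_left _ _))
  have hsdM : |s - s₀| < dM := lt_of_lt_of_le hsdist
    (le_trans (min_le_right _ _) (min_le_right _ _))
  have hsδ₄ : |s - s₀| < δ₄ := lt_of_lt_of_le hsdist
    (le_trans (min_le_left _ _) (min_le_right _ _))
  rcases lt_trichotomy τ t₀ with hcase | hcase | hcase
  -- Case C : τ < t₀
  · have ht₀pos : 0 < t₀ := lt_of_le_of_lt hτIcc.1 hcase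
    -- s < σ₀
    have hsσ : s < σ₀ := by
      by_contra hsle
      push_neg at hsle
      have h6 : t₀ ≤ rr x T e s := by
        apply le_rr x T e hT hsmem.2
        rw [hσ₀def] at hsle
        rw [div_le_iff₀ hc] at hsle
        linarith
      rw [← hτdef] at h6
      linarith
    have hs₀σ : s₀ = σ₀ := by
      rcases eq_or_lt_of_le hσs₀ with h | h
      · exact h.symm
      · exfalso
        rw [hdMdef, if_pos h] at hsdM
        have := abs_lt.mp hsdM
        linarith
    have hs₀Gm : G x T e 0 + s₀ * c x T e = Gm x T e t₀ := by
      rw [hs₀σ, hσ₀def]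
      field_simp
      ring
    -- the value at s₀
    have hub2 : ∀ z, |z - τ| ≤ 0 → True := fun _ _ => trivial
    -- bounds on segment endpoints of uu s
    have hτδ₂' : t₀ - δ₂ < τ := by
      have := abs_lt.mp hτδ₂
      linarith
    have hend1 : |x τ - leftL x t₀| ≤ ε/4 := hP2 τ ht₀pos hτδ₂' hcase
    have hend2 : |leftL x τ - leftL x t₀| ≤ ε/4 := by
      rcases eq_or_lt_of_le hτIcc.1 with h0τ | h0τ
      · rw [← h0τ, leftL_zero]
        exact hP2 0 ht₀pos (by linarith) (h0τ ▸ hcase)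
      · exact hP4 τ h0τ hτδ₂' hcase
    have hseg := uu_mem_segment x T e hT (s := s) hsmem
    rw [← hτdef] at hseg
    have hsegbound := abs_sub_le_max_of_mem_segment (z := leftL x t₀) hseg
    have huus : |uu x T e s - leftL x t₀| ≤ ε/4 := by
      refine le_trans hsegbound ?_
      rw [max_le_iff]
      exact ⟨hend2, hend1⟩
    -- the value at s₀ is leftL x t₀
    have huus₀ : uu x T e s₀ = leftL x t₀ := by
      by_cases hj : Gm x T e t₀ < G x T e t₀
      · have := uu_eq_left x T e (s := s₀) (by rw [← ht₀def]; exact hj)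
          (by rw [← ht₀def]; exact hs₀Gm)
        rwa [← ht₀def] at this
      · have hxL := noJump_eq x T e he hj ht₀pos ht₀.2
        have h7 : uu x T e s₀ = x t₀ := by
          rw [uu, ← ht₀def, if_neg hj]
        rw [h7, hxL]
    rw [huus₀]
    calc |uu x T e s - leftL x t₀| ≤ ε/4 := huus
      _ < ε := by linarith
  -- Case A : τ = t₀
  · have hseq : rr x T e s = rr x T e s₀ := by rw [← hτdef, ← ht₀def, hcase]
    by_cases hj : Gm x T e t₀ < G x T e t₀
    · have hgap : 0 < gap := by rw [hgapdef]; linarith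
      have hformula : uu x T e s - uu x T e s₀ =
          ((s - s₀) * c x T e / gap) * (x t₀ - leftL x t₀) := by
        rw [uu, uu, hseq, ← ht₀def, if_pos hj, if_pos hj, hgapdef]
        have hgne : G x T e t₀ - Gm x T e t₀ ≠ 0 := by
          rw [hgapdef] at hgap; linarith
        field_simp
        ring
      have habs : |uu x T e s - uu x T e s₀| = |s - s₀| * c x T e * D / gap := by
        rw [hformula, abs_mul, abs_div, abs_mul, abs_of_pos hc, abs_of_pos hgap, ← hDdef]
        ring
      rw [habs]
      have hδ₄eq : δ₄ = (ε/2) * gap / (c x T e * (D + 1)) := by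
        rw [hδ₄def, if_pos hgap]
      have hfin : |s - s₀| * c x T e * D / gap < ε := by
        have h8 : |s - s₀| * c x T e * D / gap ≤ δ₄ * c x T e * D / gap := by
          gcongr
        have h9 : δ₄ * c x T e * D / gap = (ε/2) * D / (D + 1) := by
          rw [hδ₄eq]
          field_simp
        have h10 : (ε/2) * D / (D + 1) < ε := by
          rw [div_lt_iff₀ (by linarith)]
          nlinarith
        calc |s - s₀| * c x T e * D / gap ≤ δ₄ * c x T e * D / gap := h8
          _ = (ε/2) * D / (D + 1) := h9
          _ < ε := h10
      exact hfin
    · rw [uu, uu, hseq, ← ht₀def, if_neg hj, if_neg hj]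
      simpa using hε
  -- Case B : τ > t₀
  · have hβs : β₀ < s := by
      by_contra hsle
      push_neg at hsle
      have h6 : rr x T e s ≤ t₀ := by
        apply rr_le x T e hT ht₀
        rw [hβ₀def] at hsle
        rw [le_div_iff₀ hc] at hsle
        linarith
      rw [← hτdef] at h6
      linarith
    have hs₀β' : s₀ = β₀ := by
      rcases eq_or_lt_of_le hs₀β with h | h
      · exact h
      · exfalso
        rw [hdPdef, if_pos h] at hsdP
        have := abs_lt.mp hsdP
        linarith
    have huus₀ : uu x T e s₀ = x t₀ := by
      have h7 : G x T e 0 + s₀ * c x T e = G x T e (rr x T e s₀) := by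
        rw [← ht₀def, hs₀β', hβ₀def]
        field_simp
        ring
      have := uu_eq_right x T e h7
      rwa [← ht₀def] at this
    have hτδ₁' : τ < t₀ + δ₁ := by
      have := abs_lt.mp hτδ₁
      linarith
    have hend1 : |x τ - x t₀| ≤ ε/4 := hP1 τ hcase.le hτδ₁' hτIcc.2
    have hend2 : |leftL x τ - x t₀| ≤ ε/4 := hP3 τ hcase hτδ₁' hτIcc.2
    have hseg := uu_mem_segment x T e hT (s := s) hsmem
    rw [← hτdef] at hseg
    have hsegbound := abs_sub_le_max_of_mem_segment (z := x t₀) hseg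
    rw [huus₀]
    have huus : |uu x T e s - x t₀| ≤ ε/4 := by
      refine le_trans hsegbound ?_
      rw [max_le_iff]
      exact ⟨hend2, hend1⟩
    calc |uu x T e s - x t₀| ≤ ε/4 := huus
      _ < ε := by linarith

end RepCon

lemma exists_rep_cadlag {T : ℝ} (hT : 0 < T) {x : ℝ → ℝ} (hx : IsCadlagOn T x) :
    ∃ u r : ℝ → ℝ, IsParamRep T x u r := by
  classical
  have hDc : Set.Countable {t : ℝ | 0 < t ∧ t ≤ T ∧ x t ≠ leftL x t} := hx.countable_jumps
  have hD'c : (insert (T+1) {t : ℝ | 0 < t ∧ t ≤ T ∧ x t ≠ leftL x t}).Countable :=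
    hDc.insert _
  obtain ⟨e, he⟩ := Set.Countable.exists_eq_range hD'c (Set.insert_nonempty _ _)
  have heD : {t : ℝ | 0 < t ∧ t ≤ T ∧ x t ≠ leftL x t} ⊆ Set.range e := by
    rw [← he]; exact Set.subset_insert _ _
  refine ⟨RepCon.uu x T e, RepCon.rr x T e, ?_, ?_, ?_, ?_, ?_, ?_, ?_, ?_⟩
  · exact RepCon.uu_continuousOn x T e hT hx heD
  · exact RepCon.rr_continuousOn x T e hT
  · exact RepCon.rr_monoOn x T e hT
  · exact RepCon.rr_zero x T e hT
  · exact RepCon.rr_one x T e hT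
  · exact fun s hs => RepCon.uu_mem_segment x T e hT hs
  · exact RepCon.uu_surj x T e hT heD
  · exact RepCon.uu_order x T e hT

lemma IsCadlagOn.exists_subseq_tendsto {T : ℝ} {x : ℝ → ℝ} (hx : IsCadlagOn T x) {t : ℝ}
    (ht : t ∈ Icc (0:ℝ) T) {z : ℕ → ℝ} (hz : ∀ j, z j ∈ Icc (0:ℝ) T)
    (hzt : Tendsto z atTop (𝓝 t)) :
    ∃ φ : ℕ → ℕ, StrictMono φ ∧ ∃ a : ℝ, (a = x t ∨ a = leftL x t) ∧
      Tendsto (fun j => x (z (φ j))) atTop (𝓝 a) := by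
  by_cases hfreq : ∃ᶠ j in atTop, t ≤ z j
  · obtain ⟨φ, hφ, hφt⟩ := Filter.extraction_of_frequently_atTop hfreq
    refine ⟨φ, hφ, x t, Or.inl rfl, ?_⟩
    rcases eq_or_lt_of_le ht.2 with hTt | htT
    · have hconst : ∀ j, z (φ j) = t := fun j =>
        le_antisymm (by rw [hTt]; exact (hz _).2) (hφt j)
      simpa [hconst] using (tendsto_const_nhds : Tendsto (fun _ : ℕ => x t) atTop (𝓝 (x t)))
    · have h1 : Tendsto (fun j => z (φ j)) atTop (𝓝[≥] t) :=
        tendsto_nhdsWithin_of_tendsto_nhds_of_eventually_within _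
          (hzt.comp hφ.tendsto_atTop) (Eventually.of_forall hφt)
      exact (hx.1 t ⟨ht.1, htT⟩).comp h1
  · rw [Filter.not_frequently] at hfreq
    have hev : ∀ᶠ j in atTop, z j < t := hfreq.mono fun j hj => lt_of_not_ge hj
    have ht0 : 0 < t := by
      obtain ⟨j, hj⟩ := hev.exists
      exact lt_of_le_of_lt (hz j).1 hj
    refine ⟨id, strictMono_id, leftL x t, Or.inr rfl, ?_⟩
    have h1 : Tendsto z atTop (𝓝[<] t) :=
      tendsto_nhdsWithin_of_tendsto_nhds_of_eventually_within _ hzt hev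
    exact (hx.tendsto_leftL ⟨ht0, ht.2⟩).comp h1

/-- Lemma 4.2(c): if in addition each `xₙ` is continuous, then
`limsup ‖xₙ - x‖ ≤ J_max(x)`. -/
theorem limsup_uniform_distance_le_jmax_of_continuous
    (T : ℝ) (hT : 0 < T)
    (x : ℕ → ℝ → ℝ) (x₀ : ℝ → ℝ)
    (hxc : ∀ n, IsCadlagOn T (x n)) (hx₀c : IsCadlagOn T x₀)
    (hcont : ∀ n, ContinuousOn (x n) (Set.Icc (0:ℝ) T))
    (hconv : Filter.Tendsto (fun n => dM1 T (x n) x₀) Filter.atTop (nhds 0)) :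
    Filter.limsup (fun n => supT T fun t => x n t - x₀ t) Filter.atTop ≤
      Jmax T x₀ := by
  classical
  obtain ⟨u₀c, r₀c, hrep₀⟩ := exists_rep_cadlag hT hx₀c
  set J := Jmax T x₀ with hJdef
  have hJ0 : 0 ≤ J := Jmax_nonneg
  have key : ∀ η : ℝ, 0 < η → ∀ᶠ n in atTop, supT T (fun t => x n t - x₀ t) ≤ J + η := by
    intro η hη
    by_contra hcon
    rw [Filter.not_eventually] at hcon
    have main : ∀ k : ℕ, ∃ p ∈ Icc (0:ℝ) T, ∃ q ∈ Icc (0:ℝ) T,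
        |p - q| ≤ 2/(k+1) ∧ J + η - 2/(k+1) ≤ |x₀ p - x₀ q| := by
      intro k
      set ε : ℝ := 1/(k+1) with hεdef
      have hεpos : 0 < ε := by positivity
      have hev : ∀ᶠ n in atTop, dM1 T (x n) x₀ < ε := by
        have := hconv (Iio_mem_nhds hεpos)
        simpa [Set.mem_Iio] using this
      obtain ⟨n, hn1, hn2⟩ := (hcon.and_eventually hev).exists
      have hsup : J + η < supT T (fun t => x n t - x₀ t) := not_le.mp hn1
      haveI : Nonempty (Icc (0:ℝ) T) := ⟨⟨0, left_mem_Icc.2 hT.le⟩⟩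
      obtain ⟨⟨t, htmem⟩, htval⟩ := exists_lt_of_lt_ciSup hsup
      simp only at htval
      -- extract near-optimal representations
      have hrepn := exists_rep_continuous hT (hcont n)
      have hSne : Set.Nonempty {d : ℝ | ∃ ux rx uy ry : ℝ → ℝ,
          IsParamRep T (x n) ux rx ∧ IsParamRep T x₀ uy ry ∧
          d = max (unif fun s => ux s - uy s) (unif fun s => rx s - ry s)} :=
        ⟨_, _, _, _, _, hrepn, hrep₀, rfl⟩
      obtain ⟨d, hdmem, hdε⟩ := exists_lt_of_csInf_lt hSne hn2
      obtain ⟨ux, rx, uy, ry, hrx, hry, rfl⟩ := hdmem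
      have hu : unif (fun s => ux s - uy s) < ε := lt_of_le_of_lt (le_max_left _ _) hdε
      have hr : unif (fun s => rx s - ry s) < ε := lt_of_le_of_lt (le_max_right _ _) hdε
      -- find s' with rx s' = t
      obtain ⟨s', hs'mem, hs'⟩ : ∃ s' ∈ Icc (0:ℝ) 1, rx s' = t := by
        have hmid := intermediate_value_Icc (by norm_num : (0:ℝ) ≤ 1) hrx.2.1
        have h2 : t ∈ Icc (rx 0) (rx 1) := by
          rw [hrx.2.2.2.1, hrx.2.2.2.2.1]; exact htmem
        obtain ⟨s', hs'1, hs'2⟩ := hmid h2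
        exact ⟨s', hs'1, hs'2⟩
      have hxn : ux s' = x n t := by
        have h3 := hrx.2.2.2.2.2.1 s' hs'mem
        rw [hs', leftL_eq_self_of_continuousOn (hcont n) htmem, segment_same] at h3
        exact h3
      have hcls : |x n t - uy s'| < ε := by
        rw [← hxn]
        exact lt_of_le_of_lt (le_unif ((hrx.1.sub hry.1)) hs'mem) hu
      set τ := ry s' with hτdef
      have hτmem : τ ∈ Icc (0:ℝ) T := hry.r_mem_Icc hs'mem
      have hτt : |τ - t| < ε := by
        rw [← hs', abs_sub_comm]
        exact lt_of_le_of_lt (le_unif ((hrx.2.1.sub hry.2.1)) hs'mem) hr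
      have hseg := hry.2.2.2.2.2.1 s' hs'mem
      have h5 : J + η - ε < |uy s' - x₀ t| := by
        have htri : |x n t - x₀ t| ≤ |x n t - uy s'| + |uy s' - x₀ t| := abs_sub_le _ _ _
        linarith
      have h6 : J + η - ε < max (|leftL x₀ τ - x₀ t|) (|x₀ τ - x₀ t|) :=
        lt_of_lt_of_le h5 (abs_sub_le_max_of_mem_segment hseg)
      have hε2 : ε ≤ 2/(k+1) := by
        rw [hεdef]
        gcongr
        norm_num
      rcases le_or_gt (|leftL x₀ τ - x₀ t|) (|x₀ τ - x₀ t|) with hc | hc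
      · refine ⟨t, htmem, τ, hτmem, ?_, ?_⟩
        · rw [abs_sub_comm]
          calc |τ - t| ≤ ε := hτt.le
            _ ≤ 2/(k+1) := hε2
        · have h7 : J + η - ε < |x₀ τ - x₀ t| := by rwa [max_eq_right hc] at h6
          rw [abs_sub_comm] at h7
          linarith
      · have h7 : J + η - ε < |leftL x₀ τ - x₀ t| := by rwa [max_eq_left hc.le] at h6
        rcases eq_or_ne τ 0 with hτ0 | hτ0
        · refine ⟨t, htmem, 0, left_mem_Icc.2 hT.le, ?_, ?_⟩
          · rw [← hτ0, abs_sub_comm]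
            exact hτt.le.trans hε2
          · have h8 : leftL x₀ τ = x₀ τ := by rw [hτ0]; exact leftL_zero
            rw [h8, hτ0, abs_sub_comm] at h7
            linarith
        · have hτpos : 0 < τ := lt_of_le_of_ne hτmem.1 (Ne.symm hτ0)
          have htd := hx₀c.tendsto_leftL ⟨hτpos, hτmem.2⟩
          have hev2 : ∀ᶠ w in 𝓝[<] τ, |x₀ w - leftL x₀ τ| < ε := by
            have := Metric.tendsto_nhds.mp htd ε hεpos
            simpa [Real.dist_eq] using this
          have hmax : max (τ - ε) 0 < τ := by
            rw [max_lt_iff]; exact ⟨by linarith, hτpos⟩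
          have hev3 := Ioo_mem_nhdsLT hmax
          obtain ⟨w, hw1, hw3⟩ := (hev2.and (Filter.eventually_of_mem hev3 fun _ h => h)).exists
          refine ⟨t, htmem, w, ⟨le_max_right (τ - ε) 0 |>.trans hw3.1.le, hw3.2.le.trans hτmem.2⟩,
            ?_, ?_⟩
          · have h8 : |t - w| ≤ |t - τ| + |τ - w| := abs_sub_le _ _ _
            have h9 : |τ - w| < ε := by
              have hwl : τ - ε < w := lt_of_le_of_lt (le_max_left _ _) hw3.1
              rw [abs_of_pos (by linarith [hw3.2] : (0:ℝ) < τ - w)]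
              linarith [hw3.2]
            rw [abs_sub_comm] at hτt
            have : 2/(k+1) = ε + ε := by rw [hεdef]; ring
            linarith
          · have h10 : |leftL x₀ τ - x₀ t| ≤ |leftL x₀ τ - x₀ w| + |x₀ w - x₀ t| :=
              abs_sub_le _ _ _
            rw [abs_sub_comm (leftL x₀ τ) (x₀ w)] at h10
            rw [abs_sub_comm (x₀ w) (x₀ t)] at h10
            have : 2/(k+1) = ε + ε := by rw [hεdef]; ring
            linarith
    choose p hp q hq hpq hval using main
    obtain ⟨tstar, htstar, φ₀, hφ₀, hp0⟩ := isCompact_Icc.tendsto_subseq hp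
    have hdiff : Tendsto (fun k : ℕ => (2:ℝ)/(k+1)) atTop (𝓝 0) := by
      have := tendsto_one_div_add_atTop_nhds_zero_nat (𝕜 := ℝ)
      have h2 := this.const_mul (2:ℝ)
      simpa [div_eq_mul_inv, mul_comm] using h2
    have hq0 : Tendsto (fun j => q (φ₀ j)) atTop (𝓝 tstar) := by
      have h1 : Tendsto (fun j => p (φ₀ j) - q (φ₀ j)) atTop (𝓝 0) := by
        apply squeeze_zero_norm (fun j => ?_) (hdiff.comp hφ₀.tendsto_atTop)
        simpa [Real.norm_eq_abs] using hpq (φ₀ j)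
      have := hp0.sub h1
      simpa using this
    obtain ⟨φ₁, hφ₁, a, ha, hpa⟩ := hx₀c.exists_subseq_tendsto htstar
      (fun j => hp (φ₀ j)) hp0
    have hq1 : Tendsto (fun j => q (φ₀ (φ₁ j))) atTop (𝓝 tstar) :=
      hq0.comp hφ₁.tendsto_atTop
    obtain ⟨φ₂, hφ₂, b, hb, hqb⟩ := hx₀c.exists_subseq_tendsto htstar
      (fun j => hq (φ₀ (φ₁ j))) hq1
    set ψ : ℕ → ℕ := fun j => φ₀ (φ₁ (φ₂ j)) with hψdef
    have hψmono : StrictMono ψ := hφ₀.comp (hφ₁.comp hφ₂)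
    have hψle : ∀ j, j ≤ ψ j := fun j => hψmono.le_apply
    have hlim : Tendsto (fun j => |x₀ (p (ψ j)) - x₀ (q (ψ j))| + 2/(j+1)) atTop
        (𝓝 (|a - b| + 0)) := by
      apply Tendsto.add
      · have h1 : Tendsto (fun j => x₀ (p (ψ j))) atTop (𝓝 a) := hpa.comp hφ₂.tendsto_atTop
        exact (h1.sub hqb).abs
      · have h2 := tendsto_one_div_add_atTop_nhds_zero_nat.const_mul (2:ℝ)
        rw [mul_zero] at h2
        exact h2.congr fun j => by ring
    have hlower : J + η ≤ |a - b| + 0 := by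
      apply ge_of_tendsto hlim
      filter_upwards with j
      have h1 := hval (ψ j)
      have h2 : (2:ℝ)/(ψ j + 1) ≤ 2/(j+1) := by
        have hcast : ((j:ℕ):ℝ) ≤ ((ψ j : ℕ):ℝ) := Nat.cast_le.mpr (hψle j)
        gcongr
      linarith
    have hub : |a - b| ≤ J := by
      have hjump : |x₀ tstar - leftL x₀ tstar| ≤ J := jump_le_Jmax hT hx₀c htstar
      rcases ha with rfl | rfl <;> rcases hb with rfl | rfl
      · simpa using hJ0
      · exact hjump
      · rwa [abs_sub_comm]
      · simpa using hJ0
    linarith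
  have hcb : IsCoboundedUnder (· ≤ ·) atTop (fun n => supT T fun t => x n t - x₀ t) :=
    Filter.isCoboundedUnder_le_of_eventually_le atTop
      (Filter.Eventually.of_forall fun _ => supT_nonneg)
  apply le_of_forall_pos_le_add
  intro η hη
  exact Filter.limsup_le_of_le hcb (key η hη)
end

section
/- Let h : ℝ → ℝ be Lipschitz with constant c. Let u, uₙ : [0,1] → ℝ be bounded Borel measurable functions, and let r′, r′ₙ : [0,1] → [0,∞) be Lebesgue integrable with R := ess sup r′ₙ < ∞. Suppose v, vₙ : [0,1] → ℝ are bounded Borel measurable functions satisfying v(s) = u(s) + ∫₀ˢ h(v(w)) r′(w) dw and vₙ(s) = uₙ(s) + ∫₀ˢ h(vₙ(w)) r′ₙ(w) dw for all s ∈ [0,1]. Then, with M := sup_{s∈[0,1]} |h(v(s))|, one has sup_{s∈[0,1]} |vₙ(s) − v(s)| ≤ (‖uₙ − u‖ + M·‖r′ₙ − r′‖₁)·e^{Rc}. (The Gronwall estimate (3.2) in the proof of Theorem 1.1.) -/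
open Set Filter MeasureTheory Topology

/-- The Gronwall estimate (3.2) in the proof of Theorem 1.1. -/
theorem gronwall_estimate_for_parametric_integral_equation
    (c : ℝ) (h : ℝ → ℝ)
    (hLip : ∀ w₁ w₂ : ℝ, |h w₁ - h w₂| ≤ c * |w₁ - w₂|)
    (u un : ℝ → ℝ) (hub : BddMeasOn 1 u) (hunb : BddMeasOn 1 un)
    (r' rn' : ℝ → ℝ)
    (hr'nn : ∀ s ∈ Set.Icc (0:ℝ) 1, 0 ≤ r' s)
    (hrn'nn : ∀ s ∈ Set.Icc (0:ℝ) 1, 0 ≤ rn' s)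
    (hr'int : IntervalIntegrable r' MeasureTheory.volume 0 1)
    (hrn'int : IntervalIntegrable rn' MeasureTheory.volume 0 1)
    (R : ℝ)
    (hR : ∀ᵐ s ∂(MeasureTheory.volume.restrict (Set.Icc (0:ℝ) 1)), rn' s ≤ R)
    (v vn : ℝ → ℝ) (hvb : BddMeasOn 1 v) (hvnb : BddMeasOn 1 vn)
    (hv : ∀ s ∈ Set.Icc (0:ℝ) 1, v s = u s + ∫ w in (0:ℝ)..s, h (v w) * r' w)
    (hvn : ∀ s ∈ Set.Icc (0:ℝ) 1, vn s = un s + ∫ w in (0:ℝ)..s, h (vn w) * rn' w) :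
    unif (fun s => vn s - v s) ≤
      (unif (fun s => un s - u s) +
          (⨆ s : Set.Icc (0:ℝ) 1, |h (v s.1)|) * L1norm (fun s => rn' s - r' s)) *
        Real.exp (R * c) := by
  classical
  obtain ⟨⟨Mu, hMu⟩, hum⟩ := hub
  obtain ⟨⟨Mun, hMun⟩, hunm⟩ := hunb
  obtain ⟨⟨Mv, hMv⟩, hvm⟩ := hvb
  obtain ⟨⟨Mvn, hMvn⟩, hvnm⟩ := hvnb
  have h01 : (0:ℝ) ∈ Set.Icc (0:ℝ) 1 := ⟨le_rfl, zero_le_one⟩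
  have hc : (0 : ℝ) ≤ c := by
    have h1 := hLip 0 1
    have h2 := abs_nonneg (h 0 - h 1)
    norm_num at h1
    linarith
  have hIcc : MeasurableSet (Set.Icc (0:ℝ) 1) := measurableSet_Icc
  haveI hnb : (MeasureTheory.ae (volume.restrict (Set.Icc (0:ℝ) 1))).NeBot := by
    refine MeasureTheory.ae_neBot.mpr ?_
    rw [Ne, Measure.restrict_eq_zero]
    simp [Real.volume_Icc]
  have hR0 : 0 ≤ R := by
    have hae : ∀ᵐ s ∂(volume.restrict (Set.Icc (0:ℝ) 1)), 0 ≤ rn' s :=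
      (ae_restrict_mem hIcc).mono fun x hx => hrn'nn x hx
    obtain ⟨s, hs1, hs2⟩ := (hR.and hae).exists
    linarith
  set K := c * R with hK
  have hK0 : 0 ≤ K := mul_nonneg hc hR0
  have hcont : Continuous h := by
    refine LipschitzWith.continuous (K := Real.toNNReal c) ?_
    refine LipschitzWith.of_dist_le_mul fun x y => ?_
    rw [Real.dist_eq, Real.dist_eq, Real.coe_toNNReal c hc]
    exact hLip x y
  have hvam : AEMeasurable v (volume.restrict (Set.Icc (0:ℝ) 1)) :=
    aemeasurable_restrict_of_measurable_subtype hIcc hvm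
  have hvnam : AEMeasurable vn (volume.restrict (Set.Icc (0:ℝ) 1)) :=
    aemeasurable_restrict_of_measurable_subtype hIcc hvnm
  have hhv : AEMeasurable (fun w => h (v w)) (volume.restrict (Set.Icc (0:ℝ) 1)) :=
    hcont.measurable.comp_aemeasurable hvam
  have hhvn : AEMeasurable (fun w => h (vn w)) (volume.restrict (Set.Icc (0:ℝ) 1)) :=
    hcont.measurable.comp_aemeasurable hvnam
  set φ : ℝ → ℝ := fun w => |vn w - v w| with hφ
  have hφam : AEMeasurable φ (volume.restrict (Set.Icc (0:ℝ) 1)) :=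
    continuous_abs.measurable.comp_aemeasurable (hvnam.sub hvam)
  -- bounds for h ∘ v and h ∘ vn
  have habsb : ∀ (x M' : ℝ), |x| ≤ M' → |h x| ≤ c * M' + |h 0| := by
    intro x M' hx
    have h1 := hLip x 0
    have h2 : |h x| ≤ |h x - h 0| + |h 0| := by
      calc |h x| = |(h x - h 0) + h 0| := by ring_nf
        _ ≤ |h x - h 0| + |h 0| := abs_add_le _ _
    have h3 : c * |x - 0| ≤ c * M' := by
      have : |x - 0| ≤ M' := by simpa using hx
      exact mul_le_mul_of_nonneg_left this hc
    linarith
  set Mh := c * Mv + |h 0| with hMhdef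
  set Mhn := c * Mvn + |h 0| with hMhndef
  have hhvb : ∀ t ∈ Set.Icc (0:ℝ) 1, |h (v t)| ≤ Mh := fun t ht => habsb _ _ (hMv t ht)
  have hhvnb : ∀ t ∈ Set.Icc (0:ℝ) 1, |h (vn t)| ≤ Mhn := fun t ht => habsb _ _ (hMvn t ht)
  -- helper : bounded a.e.-measurable functions are interval integrable on [0,1]
  have hbddInt : ∀ (f : ℝ → ℝ) (C : ℝ), AEMeasurable f (volume.restrict (Set.Icc (0:ℝ) 1)) →
      (∀ t ∈ Set.Icc (0:ℝ) 1, |f t| ≤ C) → IntervalIntegrable f volume 0 1 := by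
    intro f C hm hb
    rw [intervalIntegrable_iff_integrableOn_Icc_of_le zero_le_one]
    refine Integrable.mono' (integrable_const C) hm.aestronglyMeasurable ?_
    exact (ae_restrict_mem hIcc).mono fun x hx => by
      simpa [Real.norm_eq_abs] using hb x hx
  have hrn'I : IntegrableOn rn' (Set.Icc (0:ℝ) 1) volume :=
    (intervalIntegrable_iff_integrableOn_Icc_of_le zero_le_one).1 hrn'int
  have hr'I : IntegrableOn r' (Set.Icc (0:ℝ) 1) volume :=
    (intervalIntegrable_iff_integrableOn_Icc_of_le zero_le_one).1 hr'int
  have hf1 : IntervalIntegrable (fun w => h (vn w) * rn' w) volume 0 1 := by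
    rw [intervalIntegrable_iff_integrableOn_Icc_of_le zero_le_one]
    refine Integrable.bdd_mul (c := Mhn) hrn'I hhvn.aestronglyMeasurable ?_
    exact (ae_restrict_mem hIcc).mono fun x hx => by
      simpa [Real.norm_eq_abs] using hhvnb x hx
  have hf2 : IntervalIntegrable (fun w => h (v w) * r' w) volume 0 1 := by
    rw [intervalIntegrable_iff_integrableOn_Icc_of_le zero_le_one]
    refine Integrable.bdd_mul (c := Mh) hr'I hhv.aestronglyMeasurable ?_
    exact (ae_restrict_mem hIcc).mono fun x hx => by
      simpa [Real.norm_eq_abs] using hhvb x hx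
  have hφint : IntervalIntegrable φ volume 0 1 := by
    refine hbddInt φ (Mvn + Mv) hφam fun t ht => ?_
    have : |vn t - v t| ≤ |vn t| + |v t| := abs_sub _ _
    have h2 := hMv t ht
    have h3 := hMvn t ht
    simp only [hφ, abs_abs]
    linarith
  have hrrint : IntervalIntegrable (fun w => |rn' w - r' w|) volume 0 1 :=
    (hrn'int.sub hr'int).abs
  -- sup facts
  haveI hne : Nonempty (Set.Icc (0:ℝ) 1) := ⟨⟨0, h01⟩⟩
  set M := (⨆ s : Set.Icc (0:ℝ) 1, |h (v s.1)|) with hMdef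
  set N := unif (fun s => un s - u s) with hNdef
  set L1 := L1norm (fun s => rn' s - r' s) with hL1def
  have hMbdd : BddAbove (Set.range fun s : Set.Icc (0:ℝ) 1 => |h (v s.1)|) := by
    refine ⟨Mh, ?_⟩
    rintro x ⟨s, rfl⟩
    exact hhvb s.1 s.2
  have hMge : ∀ t, t ∈ Set.Icc (0:ℝ) 1 → |h (v t)| ≤ M := fun t ht =>
    le_ciSup hMbdd (⟨t, ht⟩ : Set.Icc (0:ℝ) 1)
  have hM0 : 0 ≤ M := le_trans (abs_nonneg _) (hMge 0 h01)
  have hNbdd : BddAbove (Set.range fun s : Set.Icc (0:ℝ) 1 => |un s.1 - u s.1|) := by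
    refine ⟨Mun + Mu, ?_⟩
    rintro x ⟨s, rfl⟩
    exact (abs_sub _ _).trans (add_le_add (hMun s.1 s.2) (hMu s.1 s.2))
  have hNge : ∀ t, t ∈ Set.Icc (0:ℝ) 1 → |un t - u t| ≤ N := fun t ht =>
    le_ciSup hNbdd (⟨t, ht⟩ : Set.Icc (0:ℝ) 1)
  have hN0 : 0 ≤ N := le_trans (abs_nonneg _) (hNge 0 h01)
  have hL10 : 0 ≤ L1 := by
    rw [hL1def, L1norm]
    exact intervalIntegral.integral_nonneg zero_le_one fun x _ => abs_nonneg _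
  set A := N + M * L1 with hAdef
  have hA0 : 0 ≤ A := by positivity
  set B := Mvn + Mv with hBdef
  have hφB : ∀ t ∈ Set.Icc (0:ℝ) 1, φ t ≤ B := by
    intro t ht
    have : |vn t - v t| ≤ |vn t| + |v t| := abs_sub _ _
    have h2 := hMv t ht
    have h3 := hMvn t ht
    simp only [hφ, hBdef]
    linarith
  have hB0 : 0 ≤ B := le_trans (abs_nonneg _) (hφB 0 h01)
  -- restriction of interval integrability
  have hmono : ∀ {f : ℝ → ℝ}, IntervalIntegrable f volume 0 1 → ∀ s ∈ Set.Icc (0:ℝ) 1,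
      IntervalIntegrable f volume 0 s := by
    intro f hf s hs
    refine hf.mono_set ?_
    rw [Set.uIcc_of_le hs.1, Set.uIcc_of_le zero_le_one]
    exact Set.Icc_subset_Icc le_rfl hs.2
  -- the combined integrand and its integrability
  have hD : IntervalIntegrable
      (fun w => (h (vn w) - h (v w)) * rn' w + h (v w) * (rn' w - r' w)) volume 0 1 := by
    have hd : IntervalIntegrable (fun w => (h (vn w) - h (v w)) * rn' w) volume 0 1 := by
      rw [intervalIntegrable_iff_integrableOn_Icc_of_le zero_le_one]
      refine Integrable.bdd_mul (c := Mhn + Mh) hrn'I (hhvn.sub hhv).aestronglyMeasurable ?_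
      refine (ae_restrict_mem hIcc).mono fun x hx => ?_
      have := (abs_sub (h (vn x)) (h (v x))).trans (add_le_add (hhvnb x hx) (hhvb x hx))
      simpa [Real.norm_eq_abs] using this
    have hg : IntervalIntegrable (fun w => h (v w) * (rn' w - r' w)) volume 0 1 := by
      rw [intervalIntegrable_iff_integrableOn_Icc_of_le zero_le_one]
      refine Integrable.bdd_mul (c := Mh) (hrn'I.sub hr'I) hhv.aestronglyMeasurable ?_
      exact (ae_restrict_mem hIcc).mono fun x hx => by
        simpa [Real.norm_eq_abs] using hhvb x hx
    exact hd.add hg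
  have hDbnd : IntervalIntegrable (fun w => K * φ w + M * |rn' w - r' w|) volume 0 1 :=
    (hφint.const_mul K).add (hrrint.const_mul M)
  -- a.e. pointwise bound on the integrand
  have haeKey : ∀ᵐ w ∂(volume.restrict (Set.Icc (0:ℝ) 1)),
      |(h (vn w) - h (v w)) * rn' w + h (v w) * (rn' w - r' w)|
        ≤ K * φ w + M * |rn' w - r' w| := by
    filter_upwards [hR, ae_restrict_mem hIcc] with w hw1 hw2
    have l1 : |(h (vn w) - h (v w)) * rn' w| ≤ K * φ w := by
      rw [abs_mul, abs_of_nonneg (hrn'nn w hw2)]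
      have e1 : |h (vn w) - h (v w)| ≤ c * φ w := hLip (vn w) (v w)
      calc |h (vn w) - h (v w)| * rn' w ≤ (c * φ w) * rn' w :=
            mul_le_mul_of_nonneg_right e1 (hrn'nn w hw2)
        _ ≤ (c * φ w) * R := mul_le_mul_of_nonneg_left hw1 (mul_nonneg hc (abs_nonneg _))
        _ = K * φ w := by ring
    have l2 : |h (v w) * (rn' w - r' w)| ≤ M * |rn' w - r' w| := by
      rw [abs_mul]
      exact mul_le_mul_of_nonneg_right (hMge w hw2) (abs_nonneg _)
    calc |(h (vn w) - h (v w)) * rn' w + h (v w) * (rn' w - r' w)|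
        ≤ |(h (vn w) - h (v w)) * rn' w| + |h (v w) * (rn' w - r' w)| := abs_add_le _ _
      _ ≤ K * φ w + M * |rn' w - r' w| := add_le_add l1 l2
  -- Step 1: the basic integral inequality
  have step : ∀ s ∈ Set.Icc (0:ℝ) 1, φ s ≤ A + K * ∫ w in (0:ℝ)..s, φ w := by
    intro s hs
    have hDs := hmono hD s hs
    have hDbs := hmono hDbnd s hs
    have eq1 : (∫ w in (0:ℝ)..s,
          ((h (vn w) - h (v w)) * rn' w + h (v w) * (rn' w - r' w)))
        = (∫ w in (0:ℝ)..s, h (vn w) * rn' w) - ∫ w in (0:ℝ)..s, h (v w) * r' w := by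
      rw [← intervalIntegral.integral_sub (hmono hf1 s hs) (hmono hf2 s hs)]
      exact intervalIntegral.integral_congr fun w _ => by ring
    have he : vn s - v s = (un s - u s) +
        ∫ w in (0:ℝ)..s, ((h (vn w) - h (v w)) * rn' w + h (v w) * (rn' w - r' w)) := by
      rw [eq1, hvn s hs, hv s hs]
      ring
    have h1 : φ s ≤ |un s - u s| +
        |∫ w in (0:ℝ)..s, ((h (vn w) - h (v w)) * rn' w + h (v w) * (rn' w - r' w))| := by
      rw [hφ]
      simp only []
      rw [he]
      exact abs_add_le _ _
    have h2 : |∫ w in (0:ℝ)..s, ((h (vn w) - h (v w)) * rn' w + h (v w) * (rn' w - r' w))|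
        ≤ ∫ w in (0:ℝ)..s, |(h (vn w) - h (v w)) * rn' w + h (v w) * (rn' w - r' w)| :=
      intervalIntegral.abs_integral_le_integral_abs hs.1
    have h3 : (∫ w in (0:ℝ)..s, |(h (vn w) - h (v w)) * rn' w + h (v w) * (rn' w - r' w)|)
        ≤ ∫ w in (0:ℝ)..s, (K * φ w + M * |rn' w - r' w|) := by
      refine intervalIntegral.integral_mono_ae_restrict hs.1 hDs.abs hDbs ?_
      exact haeKey.filter_mono (ae_mono (Measure.restrict_mono
        (Set.Icc_subset_Icc le_rfl hs.2) le_rfl))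
    have h4 : (∫ w in (0:ℝ)..s, (K * φ w + M * |rn' w - r' w|))
        = K * (∫ w in (0:ℝ)..s, φ w) + M * ∫ w in (0:ℝ)..s, |rn' w - r' w| := by
      rw [intervalIntegral.integral_add ((hmono hφint s hs).const_mul K)
        ((hmono hrrint s hs).const_mul M), intervalIntegral.integral_const_mul,
        intervalIntegral.integral_const_mul]
    have h5 : (∫ w in (0:ℝ)..s, |rn' w - r' w|) ≤ L1 := by
      rw [hL1def, L1norm]
      refine intervalIntegral.integral_mono_interval le_rfl hs.1 hs.2 ?_ hrrint
      exact Filter.Eventually.of_forall fun x => abs_nonneg _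
    have h6 := hNge s hs
    have h7 : M * (∫ w in (0:ℝ)..s, |rn' w - r' w|) ≤ M * L1 :=
      mul_le_mul_of_nonneg_left h5 hM0
    rw [hAdef]
    linarith
  -- Step 2: induction
  have ind : ∀ n : ℕ, ∀ s ∈ Set.Icc (0:ℝ) 1,
      φ s ≤ A * (∑ k ∈ Finset.range n, K ^ k * s ^ k / (Nat.factorial k))
        + B * K ^ n * s ^ n / (Nat.factorial n) := by
    intro n
    induction n with
    | zero => intro s hs; simpa using hφB s hs
    | succ n ih =>
      intro s hs
      have hφs := hmono hφint s hs
      have hFc : Continuous (fun w : ℝ => A * (∑ k ∈ Finset.range n, K ^ k * w ^ k / (Nat.factorial k))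
          + B * K ^ n * w ^ n / (Nat.factorial n)) := by
        refine Continuous.add (Continuous.mul continuous_const ?_) (Continuous.div_const
          (Continuous.mul continuous_const (continuous_pow n)) _)
        exact continuous_finset_sum _ fun k _ => Continuous.div_const
          (Continuous.mul continuous_const (continuous_pow k)) _
      have h2 : (∫ w in (0:ℝ)..s, φ w)
          ≤ ∫ w in (0:ℝ)..s, (A * (∑ k ∈ Finset.range n, K ^ k * w ^ k / (Nat.factorial k))
              + B * K ^ n * w ^ n / (Nat.factorial n)) := by
        refine intervalIntegral.integral_mono_on hs.1 hφs (hFc.intervalIntegrable 0 s) ?_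
        intro w hw
        exact ih w ⟨hw.1, hw.2.trans hs.2⟩
      have pint : ∀ (m : ℕ) (a : ℝ), (∫ w in (0:ℝ)..s, a * w ^ m) = a * (s ^ (m+1) / (m+1)) := by
        intro m a
        rw [intervalIntegral.integral_const_mul, integral_pow]
        norm_num
      have h3 : (∫ w in (0:ℝ)..s, (A * (∑ k ∈ Finset.range n, K ^ k * w ^ k / (Nat.factorial k))
              + B * K ^ n * w ^ n / (Nat.factorial n)))
          = (∑ k ∈ Finset.range n, (A * K ^ k / (Nat.factorial k)) * (s ^ (k+1) / (k+1)))
            + (B * K ^ n / (Nat.factorial n)) * (s ^ (n+1) / (n+1)) := by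
        have hco : Set.EqOn (fun w : ℝ => A * (∑ k ∈ Finset.range n, K ^ k * w ^ k / (Nat.factorial k))
              + B * K ^ n * w ^ n / (Nat.factorial n))
            (fun w : ℝ => (∑ k ∈ Finset.range n, (A * K ^ k / (Nat.factorial k)) * w ^ k)
              + (B * K ^ n / (Nat.factorial n)) * w ^ n) (Set.uIcc 0 s) := by
          intro w _
          simp only [Finset.mul_sum]
          congr 1
          · exact Finset.sum_congr rfl fun k _ => by ring
          · ring
        rw [intervalIntegral.integral_congr hco]
        have hint1 : ∀ k ∈ Finset.range n, IntervalIntegrable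
            (fun w : ℝ => (A * K ^ k / (Nat.factorial k)) * w ^ k) volume 0 s :=
          fun k _ => (Continuous.mul continuous_const (continuous_pow k)).intervalIntegrable 0 s
        have hsumc : Continuous (fun w : ℝ => ∑ k ∈ Finset.range n,
            (A * K ^ k / (Nat.factorial k)) * w ^ k) :=
          continuous_finset_sum _ fun k _ => Continuous.mul continuous_const (continuous_pow k)
        rw [intervalIntegral.integral_add (g := fun w : ℝ => (B * K ^ n / (Nat.factorial n)) * w ^ n)
          (hsumc.intervalIntegrable 0 s)
          ((Continuous.mul continuous_const (continuous_pow n)).intervalIntegrable 0 s),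
          intervalIntegral.integral_finset_sum hint1]
        rw [pint n (B * K ^ n / (Nat.factorial n))]
        congr 1
        exact Finset.sum_congr rfl fun k _ => pint k _
      have h4 : φ s ≤ A + K * ((∑ k ∈ Finset.range n, (A * K ^ k / (Nat.factorial k)) * (s ^ (k+1) / (k+1)))
            + (B * K ^ n / (Nat.factorial n)) * (s ^ (n+1) / (n+1))) := by
        have := step s hs
        have := mul_le_mul_of_nonneg_left (h2.trans_eq h3) hK0
        linarith
      refine h4.trans (le_of_eq ?_)
      rw [Finset.sum_range_succ']
      rw [mul_add, Finset.mul_sum, mul_add, Finset.mul_sum]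
      have hterm : ∀ k ∈ Finset.range n,
          K * ((A * K ^ k / (Nat.factorial k)) * (s ^ (k+1) / (k+1)))
            = A * (K ^ (k+1) * s ^ (k+1) / (Nat.factorial (k+1))) := by
        intro k _
        rw [Nat.factorial_succ]
        have hk1 : ((k:ℝ) + 1) ≠ 0 := by positivity
        have hkf : ((Nat.factorial k : ℝ)) ≠ 0 := Nat.cast_ne_zero.mpr (Nat.factorial_ne_zero k)
        push_cast
        field_simp
        ring
      rw [Finset.sum_congr rfl hterm]
      have hlast : K * ((B * K ^ n / (Nat.factorial n)) * (s ^ (n+1) / (n+1)))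
          = B * K ^ (n+1) * s ^ (n+1) / (Nat.factorial (n+1)) := by
        rw [Nat.factorial_succ]
        have hn1 : ((n:ℝ) + 1) ≠ 0 := by positivity
        have hnf : ((Nat.factorial n : ℝ)) ≠ 0 := Nat.cast_ne_zero.mpr (Nat.factorial_ne_zero n)
        push_cast
        field_simp
        ring
      rw [hlast]
      simp only [pow_zero, Nat.factorial_zero, Nat.cast_one]
      ring
  -- Step 3: pass to the limit
  have final : ∀ s ∈ Set.Icc (0:ℝ) 1, φ s ≤ A * Real.exp (R * c) := by
    intro s hs
    have hKs : 0 ≤ K * s := mul_nonneg hK0 hs.1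
    have hlim : Filter.Tendsto
        (fun n : ℕ => A * Real.exp (R * c) + B * ((K * s) ^ n / (Nat.factorial n)))
        Filter.atTop (nhds (A * Real.exp (R * c))) := by
      have := (FloorSemiring.tendsto_pow_div_factorial_atTop (K * s)).const_mul B
      have h0 : A * Real.exp (R * c) + B * 0 = A * Real.exp (R * c) := by ring
      simpa [h0] using (tendsto_const_nhds.add this)
    refine ge_of_tendsto' hlim fun n => ?_
    have h1 := ind n s hs
    have h2 : (∑ k ∈ Finset.range n, K ^ k * s ^ k / (Nat.factorial k))
        = ∑ k ∈ Finset.range n, (K * s) ^ k / (Nat.factorial k) :=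
      Finset.sum_congr rfl fun k _ => by rw [mul_pow K s k]
    have h3 : (∑ k ∈ Finset.range n, (K * s) ^ k / (Nat.factorial k)) ≤ Real.exp (K * s) :=
      Real.sum_le_exp_of_nonneg hKs n
    have h4 : Real.exp (K * s) ≤ Real.exp (R * c) := by
      refine Real.exp_le_exp.mpr ?_
      have : K * s ≤ K * 1 := mul_le_mul_of_nonneg_left hs.2 hK0
      rw [hK] at this ⊢
      linarith
    have h5 : A * (∑ k ∈ Finset.range n, K ^ k * s ^ k / (Nat.factorial k))
        ≤ A * Real.exp (R * c) := by
      rw [h2]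
      exact mul_le_mul_of_nonneg_left (h3.trans h4) hA0
    have h6 : B * K ^ n * s ^ n / (Nat.factorial n) = B * ((K * s) ^ n / (Nat.factorial n)) := by
      rw [mul_pow]
      ring
    rw [h6] at h1
    linarith
  have hfin : (⨆ s : Set.Icc (0:ℝ) 1, |vn s.1 - v s.1|) ≤ A * Real.exp (R * c) :=
    ciSup_le fun s => final s.1 s.2
  calc unif (fun s => vn s - v s) = ⨆ s : Set.Icc (0:ℝ) 1, |vn s.1 - v s.1| := rfl
    _ ≤ A * Real.exp (R * c) := hfin
    _ = (N + M * L1) * Real.exp (R * c) := by rw [hAdef]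
end

section
/- Let T > 0, let x be a càdlàg function on [0,T], and let (u, r) ∈ Π(x) be a parametric representation of x. Then sup_{s∈[0,1]} |x(r(s)) − u(s)| = J_max(x). (The identity ‖x ∘ r − u‖ = J_max(x) used in the proof of Lemma 4.2(a).) -/
open Set Filter MeasureTheory Topology

/-- The identity `‖x ∘ r − u‖ = J_max(x)` used in the proof of Lemma 4.2(a). -/
theorem sup_comp_sub_eq_jmax
    (T : ℝ) (hT : 0 < T) (x : ℝ → ℝ) (hx : IsCadlagOn T x)
    (u r : ℝ → ℝ) (hp : IsParamRep T x u r) :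
    (⨆ s : Set.Icc (0:ℝ) 1, |x (r s.1) - u s.1|) = Jmax T x := by
  obtain ⟨hu, hr, hmono, hr0, hr1, hseg, hsurj, hord⟩ := hp
  have h01 : (0:ℝ) ∈ Set.Icc (0:ℝ) 1 := by norm_num
  have h11 : (1:ℝ) ∈ Set.Icc (0:ℝ) 1 := by norm_num
  set A := Set.range (fun s : Set.Icc (0:ℝ) 1 => |x (r s.1) - u s.1|) with hA
  set B := Set.range (fun t : Set.Icc (0:ℝ) T => |x t.1 - leftL x t.1|) with hB
  have hBA : B ⊆ A := by
    rintro b ⟨⟨t, ht⟩, rfl⟩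
    obtain ⟨s, hs, hrs, hus⟩ := hsurj t ht (leftL x t) (left_mem_segment ℝ _ _)
    exact ⟨⟨s, hs⟩, by simp [hrs, hus]⟩
  have hAB : ∀ a ∈ A, ∃ b ∈ B, a ≤ b := by
    rintro a ⟨⟨s, hs⟩, rfl⟩
    have hrt : r s ∈ Set.Icc (0:ℝ) T := by
      constructor
      · rw [← hr0]; exact hmono h01 hs hs.1
      · rw [← hr1]; exact hmono hs h11 hs.2
    refine ⟨|x (r s) - leftL x (r s)|, ⟨⟨r s, hrt⟩, rfl⟩, ?_⟩
    show |x (r s) - u s| ≤ |x (r s) - leftL x (r s)|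
    have hu' := hseg s hs
    rw [segment_eq_uIcc] at hu'
    rcases le_total (leftL x (r s)) (x (r s)) with h | h
    · rw [Set.uIcc_of_le h] at hu'
      rw [abs_of_nonneg (by linarith [hu'.1, hu'.2] : (0:ℝ) ≤ x (r s) - u s),
          abs_of_nonneg (by linarith : (0:ℝ) ≤ x (r s) - leftL x (r s))]
      linarith [hu'.1]
    · rw [Set.uIcc_of_ge h] at hu'
      rw [abs_of_nonpos (by linarith [hu'.1, hu'.2] : x (r s) - u s ≤ 0),
          abs_of_nonpos (by linarith : x (r s) - leftL x (r s) ≤ 0)]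
      linarith [hu'.2]
  have hAne : A.Nonempty := ⟨|x (r 0) - u 0|, ⟨⟨0, h01⟩, rfl⟩⟩
  have hBne : B.Nonempty := ⟨|x 0 - leftL x 0|, ⟨⟨0, ⟨le_refl 0, hT.le⟩⟩, rfl⟩⟩
  have key : sSup A = sSup B := by
    by_cases hbdd : BddAbove B
    · have hbA : BddAbove A := by
        obtain ⟨M, hM⟩ := hbdd
        refine ⟨M, ?_⟩
        rintro a ha
        obtain ⟨b, hb, hab⟩ := hAB a ha
        exact hab.trans (hM hb)
      apply le_antisymm
      · exact csSup_le hAne (fun a ha => by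
          obtain ⟨b, hb, hab⟩ := hAB a ha
          exact hab.trans (le_csSup hbdd hb))
      · exact csSup_le_csSup hbA hBne hBA
    · have hbA : ¬ BddAbove A := fun h => hbdd (h.mono hBA)
      rw [Real.sSup_of_not_bddAbove hbA, Real.sSup_of_not_bddAbove hbdd]
  simpa [Jmax, iSup, hA, hB] using key
end
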